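/- arXiv:1109.4918 — 6 statements merged into one kernel-verified Lean document; each statement's English description precedes it below -/
import Mathlib

section
/- Let G=(V,E) be a connected graph of finite diameter (loops and infinite vertex degrees allowed) and let f : V → ℝ be bounded. Then there exists a constant c_f ∈ ℝ such that for every bounded function u₀ : V → ℝ, if (u_n) is the sequence of tug-of-war game values with terminal payoff u₀ and running payoff f, then the sequence of functions (u_n − n·c_f) is uniformly bounded, i.e. sup_{n≥0} sup_{x∈V} |u_n(x) − n·c_f| < ∞. -/
open Set Filter Topology
open scoped ENNReal Classical
set_option linter.unusedSectionVars false
set_option linter.unusedVariables false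
set_option linter.deprecated false

/-- Tug-of-war game values on the graph with adjacency relation `adj`, running payoff `f`
and terminal payoff `u₀`:
`u_{n+1}(x) = (1/2)(sup_{y∼x} u_n(y) + inf_{y∼x} u_n(y)) + f(x)`. -/
noncomputable def gameVal {V : Type*} (adj : V → V → Prop) (f u₀ : V → ℝ) : ℕ → V → ℝ
  | 0 => u₀
  | n + 1 => fun x =>
      (sSup (gameVal adj f u₀ n '' {y | adj x y}) +
        sInf (gameVal adj f u₀ n '' {y | adj x y})) / 2 + f x

/-- `c` is Player I's long term advantage for running payoff `f`: the game values with
terminal payoff `0` satisfy that `(u_n - n·c)` is uniformly bounded. -/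
def IsLTA {V : Type*} (adj : V → V → Prop) (f : V → ℝ) (c : ℝ) : Prop :=
  ∃ C : ℝ, ∀ (n : ℕ) (x : V), |gameVal adj f (fun _ => (0:ℝ)) n x - n * c| ≤ C

/-- `ReachesIn adj n x y`: there is a walk of length exactly `n` from `x` to `y`. -/
def ReachesIn {V : Type*} (adj : V → V → Prop) : ℕ → V → V → Prop
  | 0 => fun x y => x = y
  | n + 1 => fun x y => ∃ z, adj x z ∧ ReachesIn adj n z y

namespace ToWAux

variable {V : Type*} {adj : V → V → Prop} {f : V → ℝ} {M : ℝ}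

lemma gameVal_succ (adj : V → V → Prop) (f u₀ : V → ℝ) (n : ℕ) (x : V) :
    gameVal adj f u₀ (n+1) x =
      (sSup (gameVal adj f u₀ n '' {y | adj x y}) +
        sInf (gameVal adj f u₀ n '' {y | adj x y})) / 2 + f x := rfl

lemma gameVal_bound (hnbr : ∀ x : V, ∃ y, adj x y) (hM : ∀ x, |f x| ≤ M)
    {u₀ : V → ℝ} {B : ℝ} (hB : ∀ x, |u₀ x| ≤ B) :
    ∀ n x, |gameVal adj f u₀ n x| ≤ B + n * M := by
  intro n
  induction n with
  | zero => intro x; show |u₀ x| ≤ B + ((0:ℕ):ℝ) * M; simpa using hB x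
  | succ n ih =>
    intro x
    obtain ⟨y, hy⟩ := hnbr x
    set g := gameVal adj f u₀ n with hg
    have hub : ∀ z ∈ {y | adj x y}, g z ≤ B + n * M := fun z _ => (abs_le.1 (ih z)).2
    have hlb : ∀ z ∈ {y | adj x y}, -(B + n * M) ≤ g z := fun z _ => (abs_le.1 (ih z)).1
    have hbA : BddAbove (g '' {y | adj x y}) :=
      ⟨B + n * M, by rintro _ ⟨z, hz, rfl⟩; exact hub z hz⟩
    have hbB : BddBelow (g '' {y | adj x y}) :=
      ⟨-(B + n * M), by rintro _ ⟨z, hz, rfl⟩; exact hlb z hz⟩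
    have hmem : g y ∈ g '' {y | adj x y} := mem_image_of_mem g hy
    have h1 : sSup (g '' {y | adj x y}) ≤ B + n * M :=
      csSup_le ⟨_, hmem⟩ (by rintro _ ⟨z, hz, rfl⟩; exact hub z hz)
    have h2 : -(B + n * M) ≤ sSup (g '' {y | adj x y}) := (hlb y hy).trans (le_csSup hbA hmem)
    have h3 : -(B + n * M) ≤ sInf (g '' {y | adj x y}) :=
      le_csInf ⟨_, hmem⟩ (by rintro _ ⟨z, hz, rfl⟩; exact hlb z hz)
    have h4 : sInf (g '' {y | adj x y}) ≤ B + n * M := (csInf_le hbB hmem).trans (hub y hy)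
    have hf := abs_le.1 (hM x)
    rw [gameVal_succ, abs_le]
    push_cast
    constructor <;> linarith

lemma gameVal_mono (hnbr : ∀ x : V, ∃ y, adj x y) (hM : ∀ x, |f x| ≤ M)
    {u₀ v₀ : V → ℝ} {Bu Bv t : ℝ} (hu : ∀ x, |u₀ x| ≤ Bu) (hv : ∀ x, |v₀ x| ≤ Bv)
    (h : ∀ x, u₀ x ≤ v₀ x + t) :
    ∀ n x, gameVal adj f u₀ n x ≤ gameVal adj f v₀ n x + t := by
  intro n
  induction n with
  | zero => intro x; exact h x
  | succ n ih =>
    intro x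
    obtain ⟨y, hy⟩ := hnbr x
    set gu := gameVal adj f u₀ n with hgu
    set gv := gameVal adj f v₀ n with hgv
    have hvb : ∀ z, |gv z| ≤ Bv + n * M := gameVal_bound hnbr hM hv n
    have hub : ∀ z, |gu z| ≤ Bu + n * M := gameVal_bound hnbr hM hu n
    have hbAv : BddAbove (gv '' {y | adj x y}) :=
      ⟨Bv + n * M, by rintro _ ⟨z, hz, rfl⟩; exact (abs_le.1 (hvb z)).2⟩
    have hbBu : BddBelow (gu '' {y | adj x y}) :=
      ⟨-(Bu + n * M), by rintro _ ⟨z, hz, rfl⟩; exact (abs_le.1 (hub z)).1⟩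
    have h1 : sSup (gu '' {y | adj x y}) ≤ sSup (gv '' {y | adj x y}) + t := by
      refine csSup_le ⟨_, mem_image_of_mem gu hy⟩ ?_
      rintro _ ⟨z, hz, rfl⟩
      exact (ih z).trans (add_le_add_left (le_csSup hbAv (mem_image_of_mem gv hz)) t)
    have h2 : sInf (gu '' {y | adj x y}) ≤ sInf (gv '' {y | adj x y}) + t := by
      have : sInf (gu '' {y | adj x y}) - t ≤ sInf (gv '' {y | adj x y}) := by
        refine le_csInf ⟨_, mem_image_of_mem gv hy⟩ ?_
        rintro _ ⟨z, hz, rfl⟩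
        have hle : sInf (gu '' {y | adj x y}) ≤ gu z := csInf_le hbBu (mem_image_of_mem gu hz)
        linarith [ih z]
      linarith
    rw [gameVal_succ, gameVal_succ]
    linarith

lemma gameVal_comp (adj : V → V → Prop) (f u₀ : V → ℝ) (a : ℕ) :
    ∀ (b : ℕ) (x : V), gameVal adj f u₀ (a + b) x = gameVal adj f (gameVal adj f u₀ a) b x := by
  intro b
  induction b with
  | zero => intro x; rfl
  | succ b ih =>
    intro x
    have hfun : gameVal adj f u₀ (a + b) = gameVal adj f (gameVal adj f u₀ a) b := funext ih
    show gameVal adj f u₀ ((a + b) + 1) x = _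
    rw [gameVal_succ, gameVal_succ, hfun]

noncomputable def gv {V : Type*} (adj : V → V → Prop) (f : V → ℝ) : ℕ → V → ℝ :=
  gameVal adj f fun _ => 0

noncomputable def SS {V : Type*} (adj : V → V → Prop) (f : V → ℝ) (n : ℕ) : ℝ :=
  sSup (Set.range (gv adj f n))

noncomputable def II {V : Type*} (adj : V → V → Prop) (f : V → ℝ) (n : ℕ) : ℝ :=
  sInf (Set.range (gv adj f n))

variable {V : Type*} {adj : V → V → Prop} {f : V → ℝ} {M : ℝ}

-- placeholders for chunk1 lemmas

section X
variable (hnbr : ∀ x : V, ∃ y, adj x y) (hM : ∀ x, |f x| ≤ M)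
include hnbr hM

lemma gv_bound (n : ℕ) (x : V) : |gv adj f n x| ≤ n * M := by
  simpa [gv] using gameVal_bound hnbr hM (fun x : V => by simp : ∀ x : V, |(fun _ : V => (0:ℝ)) x| ≤ 0) n x

lemma bddAbove_gv (n : ℕ) : BddAbove (Set.range (gv adj f n)) :=
  ⟨n * M, by rintro _ ⟨x, rfl⟩; exact (abs_le.1 (gv_bound hnbr hM n x)).2⟩

lemma bddBelow_gv (n : ℕ) : BddBelow (Set.range (gv adj f n)) :=
  ⟨-(n * M), by rintro _ ⟨x, rfl⟩; exact (abs_le.1 (gv_bound hnbr hM n x)).1⟩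

lemma le_SS (n : ℕ) (x : V) : gv adj f n x ≤ SS adj f n :=
  le_csSup (bddAbove_gv hnbr hM n) (Set.mem_range_self x)

lemma II_le (n : ℕ) (x : V) : II adj f n ≤ gv adj f n x :=
  csInf_le (bddBelow_gv hnbr hM n) (Set.mem_range_self x)

omit hnbr hM

lemma SS_le [Nonempty V] {n : ℕ} {b : ℝ} (h : ∀ x, gv adj f n x ≤ b) : SS adj f n ≤ b :=
  csSup_le (Set.range_nonempty _) (by rintro _ ⟨x, rfl⟩; exact h x)

lemma le_II [Nonempty V] {n : ℕ} {b : ℝ} (h : ∀ x, b ≤ gv adj f n x) : b ≤ II adj f n :=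
  le_csInf (Set.range_nonempty _) (by rintro _ ⟨x, rfl⟩; exact h x)

include hnbr hM

lemma SS_le_nM [Nonempty V] (n : ℕ) : SS adj f n ≤ n * M :=
  SS_le (fun x => (abs_le.1 (gv_bound hnbr hM n x)).2)

lemma neg_nM_le_II [Nonempty V] (n : ℕ) : -(n * M) ≤ II adj f n :=
  le_II (fun x => (abs_le.1 (gv_bound hnbr hM n x)).1)

lemma II_le_SS [Nonempty V] (n : ℕ) : II adj f n ≤ SS adj f n :=
  (II_le hnbr hM n (Classical.arbitrary V)).trans (le_SS hnbr hM n (Classical.arbitrary V))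

lemma gv_add_le (a b : ℕ) (x : V) : gv adj f (a + b) x ≤ gv adj f b x + SS adj f a := by
  have h1 : gv adj f (a + b) x = gameVal adj f (gv adj f a) b x := gameVal_comp adj f _ a b x
  rw [h1]
  exact gameVal_mono hnbr hM (Bu := a * M) (Bv := 0) (gv_bound hnbr hM a)
    (fun z => by simp) (fun z => by simpa using le_SS hnbr hM a z) b x

lemma le_gv_add (a b : ℕ) (x : V) : gv adj f b x + II adj f a ≤ gv adj f (a + b) x := by
  have h1 : gv adj f (a + b) x = gameVal adj f (gv adj f a) b x := gameVal_comp adj f _ a b x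
  rw [h1]
  have := gameVal_mono hnbr hM (Bu := 0) (Bv := a * M) (u₀ := fun _ => (0:ℝ)) (v₀ := gv adj f a)
    (t := -(II adj f a)) (fun z => by simp) (gv_bound hnbr hM a)
    (fun z => by
      have := II_le hnbr hM a z
      show (0:ℝ) ≤ gv adj f a z + -(II adj f a)
      linarith) b x
  have h2 : gv adj f b x = gameVal adj f (fun _ => (0:ℝ)) b x := rfl
  rw [h2]; linarith

lemma SS_subadd [Nonempty V] (a b : ℕ) : SS adj f (a + b) ≤ SS adj f a + SS adj f b :=
  SS_le (fun x => (gv_add_le hnbr hM a b x).trans (by linarith [le_SS hnbr hM b x]))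

lemma II_superadd [Nonempty V] (a b : ℕ) : II adj f a + II adj f b ≤ II adj f (a + b) :=
  le_II (fun x => le_trans (by linarith [II_le hnbr hM b x]) (le_gv_add hnbr hM a b x))

lemma SS_mul [Nonempty V] : ∀ (t m : ℕ), SS adj f (t * m) ≤ t * SS adj f m := by
  intro t
  induction t with
  | zero =>
    intro m
    have h0 : SS adj f 0 ≤ 0 := SS_le (fun x => le_of_eq rfl)
    simpa using h0
  | succ t ih =>
    intro m
    have h1 : SS adj f (t * m + m) ≤ SS adj f (t * m) + SS adj f m := SS_subadd hnbr hM _ _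
    have h2 := ih m
    have he : (t + 1) * m = t * m + m := by ring
    rw [he]
    push_cast
    linarith

lemma II_mul [Nonempty V] : ∀ (t m : ℕ), (t : ℝ) * II adj f m ≤ II adj f (t * m) := by
  intro t
  induction t with
  | zero =>
    intro m
    have h0 : (0:ℝ) ≤ II adj f 0 := le_II (fun x => le_of_eq rfl)
    simpa using h0
  | succ t ih =>
    intro m
    have h1 : II adj f (t * m) + II adj f m ≤ II adj f (t * m + m) := II_superadd hnbr hM _ _
    have h2 := ih m
    have he : (t + 1) * m = t * m + m := by ring
    rw [he]
    push_cast
    linarith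

lemma gv_one (x : V) : gv adj f 1 x = f x := by
  have h : gv adj f 1 x =
      (sSup ((fun _ : V => (0:ℝ)) '' {y | adj x y}) +
        sInf ((fun _ : V => (0:ℝ)) '' {y | adj x y})) / 2 + f x := rfl
  have hne : Set.Nonempty {y | adj x y} := hnbr x
  rw [h, Set.Nonempty.image_const hne 0]
  simp

lemma gv_lip_one (n : ℕ) (x : V) : |gv adj f (n + 1) x - gv adj f n x| ≤ M := by
  have h1 : gv adj f (n + 1) x = gameVal adj f f n x := by
    have h0 : gv adj f (n + 1) x = gameVal adj f (gv adj f 1) n x := by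
      rw [show n + 1 = 1 + n from by omega]
      exact gameVal_comp adj f _ 1 n x
    rw [h0, show gv adj f 1 = f from funext (gv_one hnbr hM)]
  have hup := gameVal_mono hnbr hM (u₀ := f) (v₀ := fun _ => (0:ℝ)) (Bu := M) (Bv := 0) (t := M)
    hM (fun z => by simp) (fun z => by simpa using (abs_le.1 (hM z)).2) n x
  have hdn := gameVal_mono hnbr hM (u₀ := fun _ => (0:ℝ)) (v₀ := f) (Bu := 0) (Bv := M) (t := M)
    (fun z => by simp) hM (fun z => by
      have := (abs_le.1 (hM z)).1
      show (0:ℝ) ≤ f z + M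
      linarith) n x
  have h2 : gv adj f n x = gameVal adj f (fun _ => (0:ℝ)) n x := rfl
  rw [h1, abs_le, h2]
  constructor <;> linarith

lemma gv_lip : ∀ (j n : ℕ) (x : V), |gv adj f (n + j) x - gv adj f n x| ≤ j * M := by
  intro j
  induction j with
  | zero => intro n x; simp
  | succ j ih =>
    intro n x
    have h1 : |gv adj f ((n + j) + 1) x - gv adj f (n + j) x| ≤ M := gv_lip_one hnbr hM _ x
    have h2 := ih n x
    have h3 := abs_sub_le (gv adj f ((n + j) + 1) x) (gv adj f (n + j) x) (gv adj f n x)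
    show |gv adj f ((n + j) + 1) x - gv adj f n x| ≤ _
    push_cast
    linarith

lemma step_up {x z : V} (hz : adj x z) (n : ℕ) :
    gv adj f (n + 1) x ≤ (SS adj f n + gv adj f n z) / 2 + M := by
  have e : gv adj f (n + 1) x =
      (sSup (gv adj f n '' {y | adj x y}) + sInf (gv adj f n '' {y | adj x y})) / 2 + f x := rfl
  have hs : sSup (gv adj f n '' {y | adj x y}) ≤ SS adj f n :=
    csSup_le ⟨_, mem_image_of_mem _ hz⟩ (by rintro _ ⟨w, hw, rfl⟩; exact le_SS hnbr hM n w)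
  have hi : sInf (gv adj f n '' {y | adj x y}) ≤ gv adj f n z :=
    csInf_le ⟨-(n * M), by rintro _ ⟨w, hw, rfl⟩; exact (abs_le.1 (gv_bound hnbr hM n w)).1⟩
      (mem_image_of_mem _ hz)
  have hfx := (abs_le.1 (hM x)).2
  rw [e]; linarith

lemma step_down {x z : V} (hz : adj x z) (n : ℕ) :
    (gv adj f n z + II adj f n) / 2 - M ≤ gv adj f (n + 1) x := by
  have e : gv adj f (n + 1) x =
      (sSup (gv adj f n '' {y | adj x y}) + sInf (gv adj f n '' {y | adj x y})) / 2 + f x := rfl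
  have hs : gv adj f n z ≤ sSup (gv adj f n '' {y | adj x y}) :=
    le_csSup ⟨n * M, by rintro _ ⟨w, hw, rfl⟩; exact (abs_le.1 (gv_bound hnbr hM n w)).2⟩
      (mem_image_of_mem _ hz)
  have hi : II adj f n ≤ sInf (gv adj f n '' {y | adj x y}) :=
    le_csInf ⟨_, mem_image_of_mem _ hz⟩ (by rintro _ ⟨w, hw, rfl⟩; exact II_le hnbr hM n w)
  have hfx := (abs_le.1 (hM x)).1
  rw [e]; linarith

lemma SS_add_le [Nonempty V] (n k : ℕ) : SS adj f (n + k) ≤ SS adj f n + k * M := by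
  have h1 := SS_subadd hnbr hM (V := V) n k
  have h2 := SS_le_nM hnbr hM (V := V) k
  linarith

lemma II_add_ge [Nonempty V] (n k : ℕ) : II adj f n - k * M ≤ II adj f (n + k) := by
  have h1 := II_superadd hnbr hM (V := V) n k
  have h2 := neg_nM_le_II hnbr hM (V := V) k
  linarith


lemma walk_up [Nonempty V] (hM0 : 0 ≤ M) :
    ∀ (k n : ℕ) (x y : V), ReachesIn adj k x y →
      gv adj f (n + k) x ≤
        (1/2)^k * gv adj f n y + (1 - (1/2)^k) * SS adj f n + 2 * k * M := by
  intro k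
  induction k with
  | zero =>
    intro n x y h
    have hxy : x = y := h
    subst hxy
    simp
  | succ k ih =>
    intro n x y h
    obtain ⟨z, hxz, hzy⟩ := h
    have hstep := step_up hnbr hM hxz (n + k)
    have hS := SS_add_le hnbr hM (V := V) n k
    have hih := ih n z y hzy
    have hk0 : (0:ℝ) ≤ (k:ℝ) := Nat.cast_nonneg k
    have hkM0 : (0:ℝ) ≤ (k:ℝ) * M := mul_nonneg hk0 hM0
    show gv adj f ((n + k) + 1) x ≤ _
    rw [pow_succ]
    push_cast
    linarith

lemma walk_down [Nonempty V] (hM0 : 0 ≤ M) :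
    ∀ (k n : ℕ) (x y : V), ReachesIn adj k x y →
      (1/2)^k * gv adj f n y + (1 - (1/2)^k) * II adj f n - 2 * k * M ≤
        gv adj f (n + k) x := by
  intro k
  induction k with
  | zero =>
    intro n x y h
    have hxy : x = y := h
    subst hxy
    simp
  | succ k ih =>
    intro n x y h
    obtain ⟨z, hxz, hzy⟩ := h
    have hstep := step_down hnbr hM hxz (n + k)
    have hI := II_add_ge hnbr hM (V := V) n k
    have hih := ih n z y hzy
    have hk0 : (0:ℝ) ≤ (k:ℝ) := Nat.cast_nonneg k
    have hkM0 : (0:ℝ) ≤ (k:ℝ) * M := mul_nonneg hk0 hM0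
    show _ ≤ gv adj f ((n + k) + 1) x
    rw [pow_succ]
    push_cast
    linarith

lemma contract_S [Nonempty V] (hM0 : 0 ≤ M) {D : ℕ}
    (hD : ∀ x y : V, ∃ k ≤ D, ReachesIn adj k x y) (n : ℕ) :
    SS adj f (n + D) ≤
      SS adj f n - (1/2)^D * (SS adj f n - II adj f n) + 3 * D * M := by
  apply le_of_forall_pos_le_add
  intro ε hε
  obtain ⟨_, ⟨y, rfl⟩, hy⟩ :=
    exists_lt_of_csInf_lt (Set.range_nonempty (gv adj f n)) (lt_add_of_pos_right (II adj f n) hε)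
  refine SS_le ?_
  intro x
  obtain ⟨k, hkD, hw⟩ := hD x y
  have h1 := walk_up hnbr hM hM0 k n x y hw
  have h2 := gv_lip hnbr hM (D - k) (n + k) x
  rw [show n + k + (D - k) = n + D from by omega] at h2
  have h2' := (abs_le.1 h2).2
  have hcast1 : ((D - k : ℕ) : ℝ) ≤ D := by exact_mod_cast Nat.sub_le D k
  have hcast2 : ((k : ℕ) : ℝ) ≤ D := by exact_mod_cast hkD
  have hrk : ((1:ℝ)/2)^D ≤ (1/2)^k := pow_le_pow_of_le_one (by norm_num) (by norm_num) hkD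
  have hrD0 : (0:ℝ) ≤ (1/2:ℝ)^D := by positivity
  have hrD1 : ((1:ℝ)/2)^D ≤ 1 := pow_le_one₀ (by norm_num) (by norm_num)
  have hySn : gv adj f n y ≤ SS adj f n := le_SS hnbr hM n y
  have hIle := II_le hnbr hM n y
  have m1 : (1/2:ℝ)^D * (SS adj f n - gv adj f n y) ≤ (1/2)^k * (SS adj f n - gv adj f n y) :=
    mul_le_mul_of_nonneg_right hrk (by linarith)
  have m2a : (1/2:ℝ)^D * (gv adj f n y - II adj f n) ≤ (1/2)^D * ε :=
    mul_le_mul_of_nonneg_left (by linarith) hrD0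
  have m2b : (1/2:ℝ)^D * ε ≤ ε := mul_le_of_le_one_left hε.le hrD1
  have hkM : (k:ℝ) * M ≤ (D:ℝ) * M := mul_le_mul_of_nonneg_right hcast2 hM0
  have hdkM : ((D - k : ℕ):ℝ) * M ≤ (D:ℝ) * M := mul_le_mul_of_nonneg_right hcast1 hM0
  nlinarith [h1, h2', m1, m2a, m2b, hkM, hdkM]

lemma contract_I [Nonempty V] (hM0 : 0 ≤ M) {D : ℕ}
    (hD : ∀ x y : V, ∃ k ≤ D, ReachesIn adj k x y) (n : ℕ) :
    II adj f n + (1/2)^D * (SS adj f n - II adj f n) - 3 * D * M ≤ II adj f (n + D) := by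
  apply le_of_forall_pos_le_add
  intro ε hε
  obtain ⟨_, ⟨y, rfl⟩, hy⟩ :=
    exists_lt_of_lt_csSup (Set.range_nonempty (gv adj f n)) (sub_lt_self (SS adj f n) hε)
  have main : II adj f n + (1/2)^D * (SS adj f n - II adj f n) - 3 * D * M - ε ≤ II adj f (n + D) := by
    refine le_II ?_
    intro x
    obtain ⟨k, hkD, hw⟩ := hD x y
    have h1 := walk_down hnbr hM hM0 k n x y hw
    have h2 := gv_lip hnbr hM (D - k) (n + k) x
    rw [show n + k + (D - k) = n + D from by omega] at h2
    have h2' := (abs_le.1 h2).1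
    have hcast1 : ((D - k : ℕ) : ℝ) ≤ D := by exact_mod_cast Nat.sub_le D k
    have hcast2 : ((k : ℕ) : ℝ) ≤ D := by exact_mod_cast hkD
    have hrk : ((1:ℝ)/2)^D ≤ (1/2)^k := pow_le_pow_of_le_one (by norm_num) (by norm_num) hkD
    have hrD0 : (0:ℝ) ≤ (1/2:ℝ)^D := by positivity
    have hrD1 : ((1:ℝ)/2)^D ≤ 1 := pow_le_one₀ (by norm_num) (by norm_num)
    have hySn : gv adj f n y ≤ SS adj f n := le_SS hnbr hM n y
    have hIle := II_le hnbr hM n y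
    have m1 : (1/2:ℝ)^D * (gv adj f n y - II adj f n) ≤ (1/2)^k * (gv adj f n y - II adj f n) :=
      mul_le_mul_of_nonneg_right hrk (by linarith)
    have m2a : (1/2:ℝ)^D * (SS adj f n - gv adj f n y) ≤ (1/2)^D * ε :=
      mul_le_mul_of_nonneg_left (by linarith) hrD0
    have m2b : (1/2:ℝ)^D * ε ≤ ε := mul_le_of_le_one_left hε.le hrD1
    have hkM : (k:ℝ) * M ≤ (D:ℝ) * M := mul_le_mul_of_nonneg_right hcast2 hM0
    have hdkM : ((D - k : ℕ):ℝ) * M ≤ (D:ℝ) * M := mul_le_mul_of_nonneg_right hcast1 hM0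
    nlinarith [h1, h2', m1, m2a, m2b, hkM, hdkM]
  linarith

lemma osc_bound [Nonempty V] (hM0 : 0 ≤ M) {D : ℕ}
    (hD : ∀ x y : V, ∃ k ≤ D, ReachesIn adj k x y) (hD1 : 1 ≤ D) :
    ∀ n, SS adj f n - II adj f n ≤ 3 * 2^D * D * M := by
  intro n
  induction n using Nat.strong_induction_on with
  | _ n ih =>
    by_cases hn : n < D
    · have h1 := SS_le_nM hnbr hM (V := V) n
      have h2 := neg_nM_le_II hnbr hM (V := V) n
      have hcast : (n:ℝ) ≤ D := by exact_mod_cast hn.le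
      have hpow : (1:ℝ) ≤ 2^D := one_le_pow₀ (by norm_num)
      have hnM : (n:ℝ) * M ≤ (D:ℝ) * M := mul_le_mul_of_nonneg_right hcast hM0
      have hDM : (0:ℝ) ≤ (D:ℝ) * M := mul_nonneg (Nat.cast_nonneg D) hM0
      have h32 : 2 * ((D:ℝ) * M) ≤ 3 * 2^D * ((D:ℝ) * M) :=
        mul_le_mul_of_nonneg_right (by linarith) hDM
      nlinarith
    · have hDn : D ≤ n := not_lt.1 hn
      have heq : (n - D) + D = n := Nat.sub_add_cancel hDn
      have hm : n - D < n := by omega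
      have ihm := ih (n - D) hm
      have hS := contract_S hnbr hM hM0 hD (n - D); rw [heq] at hS
      have hI := contract_I hnbr hM hM0 hD (n - D); rw [heq] at hI
      have hhalf : ((1:ℝ)/2)^D ≤ (1/2:ℝ)^1 := pow_le_pow_of_le_one (by norm_num) (by norm_num) hD1
      have h2r : 2 * ((1:ℝ)/2)^D ≤ 1 := by norm_num at hhalf ⊢; linarith
      have hid : ((1:ℝ)/2)^D * 2^D = 1 := by
        rw [← mul_pow]; norm_num
      have hOm0 : (0:ℝ) ≤ SS adj f (n - D) - II adj f (n - D) :=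
        sub_nonneg.2 (II_le_SS hnbr hM (V := V) (n - D))
      have hmul : (1 - 2 * ((1:ℝ)/2)^D) * (SS adj f (n - D) - II adj f (n - D)) ≤
          (1 - 2 * ((1:ℝ)/2)^D) * (3 * 2^D * D * M) :=
        mul_le_mul_of_nonneg_left ihm (by linarith)
      have hKid : (1 - 2 * ((1:ℝ)/2)^D) * (3 * 2^D * D * M) + 6 * (D:ℝ) * M = 3 * 2^D * D * M := by
        linear_combination (-(6 * (D:ℝ) * M)) * hid
      linarith

end X
end ToWAux

/-- For any connected graph of finite diameter and any bounded running
payoff `f` there is a constant `c_f` such that for every bounded terminal payoff `u₀` the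
sequence of game values satisfies that `(u_n − n·c_f)` is uniformly bounded. -/
theorem tug_of_war_long_term_advantage {V : Type*} (adj : V → V → Prop)
    (hsymm : Symmetric adj)
    (hdiam : ∃ D : ℕ, ∀ x y : V, ∃ n ≤ D, ReachesIn adj n x y)
    (f : V → ℝ) (hf : ∃ M : ℝ, ∀ x, |f x| ≤ M) :
    ∃ c : ℝ, ∀ u₀ : V → ℝ, (∃ M : ℝ, ∀ x, |u₀ x| ≤ M) →
      ∃ C : ℝ, ∀ (n : ℕ) (x : V), |gameVal adj f u₀ n x - n * c| ≤ C := by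
  classical
  obtain ⟨M₀, hM₀⟩ := hf
  set M : ℝ := max M₀ 0 with hMdef
  have hM : ∀ x, |f x| ≤ M := fun x => (hM₀ x).trans (le_max_left _ _)
  have hM0 : (0:ℝ) ≤ M := le_max_right _ _
  obtain ⟨D₀, hD₀⟩ := hdiam
  by_cases hnbr : ∀ x : V, ∃ y, adj x y
  · by_cases hV : Nonempty V
    · haveI := hV
      set D : ℕ := D₀ + 1 with hDdef
      have hD : ∀ x y : V, ∃ k ≤ D, ReachesIn adj k x y := by
        intro x y; obtain ⟨k, hk, h⟩ := hD₀ x y; exact ⟨k, by omega, h⟩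
      have hD1 : 1 ≤ D := by omega
      have hosc := ToWAux.osc_bound hnbr hM hM0 hD hD1
      set K : ℝ := 3 * 2^D * D * M with hKdef
      have hK0 : (0:ℝ) ≤ K := by positivity
      set E : Set ℝ := {r : ℝ | ∃ m : ℕ, r = ToWAux.SS adj f (m+1) / ((m:ℝ)+1)} with hE
      have hEne : E.Nonempty := ⟨_, 0, rfl⟩
      have hEbdd : BddBelow E := by
        refine ⟨-M, ?_⟩
        rintro r ⟨m, rfl⟩
        have h1 : -((((m:ℕ)+1 : ℕ):ℝ) * M) ≤ ToWAux.II adj f (m+1) :=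
          ToWAux.neg_nM_le_II hnbr hM (V := V) (m+1)
        have h2 := ToWAux.II_le_SS hnbr hM (V := V) (m+1)
        have hpos : (0:ℝ) < (m:ℝ) + 1 := by positivity
        rw [le_div_iff₀ hpos]
        push_cast at h1 ⊢
        nlinarith
      refine ⟨sInf E, ?_⟩
      rintro u₀ ⟨B, hB⟩
      refine ⟨K + B, ?_⟩
      intro n x
      have hcmp1 : gameVal adj f u₀ n x ≤ ToWAux.gv adj f n x + B :=
        ToWAux.gameVal_mono hnbr hM (Bu := B) (Bv := 0) hB (fun z => by simp)
          (fun z => by have h := (abs_le.1 (hB z)).2; show u₀ z ≤ 0 + B; linarith) n x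
      have hcmp2 : ToWAux.gv adj f n x ≤ gameVal adj f u₀ n x + B :=
        ToWAux.gameVal_mono hnbr hM (Bu := 0) (Bv := B) (fun z => by simp) hB
          (fun z => by have h := (abs_le.1 (hB z)).1; show (0:ℝ) ≤ u₀ z + B; linarith) n x
      have hgv : |ToWAux.gv adj f n x - n * sInf E| ≤ K := by
        cases n with
        | zero =>
          have h0 : ToWAux.gv adj f 0 x = 0 := rfl
          simp [h0, hK0]
        | succ m =>
          have hpos : (0:ℝ) < (m:ℝ) + 1 := by positivity
          have hc_le : sInf E * ((m:ℝ)+1) ≤ ToWAux.SS adj f (m+1) := by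
            have h : sInf E ≤ ToWAux.SS adj f (m+1) / ((m:ℝ)+1) :=
              csInf_le hEbdd ⟨m, rfl⟩
            exact (le_div_iff₀ hpos).1 h
          have hc_ge : ToWAux.II adj f (m+1) ≤ sInf E * ((m:ℝ)+1) := by
            have hdiv : ToWAux.II adj f (m+1) / ((m:ℝ)+1) ≤ sInf E := by
              refine le_csInf hEne ?_
              rintro r ⟨t, rfl⟩
              have hpost : (0:ℝ) < (t:ℝ) + 1 := by positivity
              rw [div_le_div_iff₀ hpos hpost]
              have h1 : (((t:ℕ)+1 : ℕ):ℝ) * ToWAux.II adj f (m+1) ≤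
                  ToWAux.II adj f ((t+1)*(m+1)) := ToWAux.II_mul hnbr hM (t+1) (m+1)
              have h2 := ToWAux.II_le_SS hnbr hM (V := V) ((t+1)*(m+1))
              have h3 : ToWAux.SS adj f ((t+1)*(m+1)) ≤
                  (((m:ℕ)+1 : ℕ):ℝ) * ToWAux.SS adj f (t+1) := by
                rw [show (t+1)*(m+1) = (m+1)*(t+1) from Nat.mul_comm _ _]
                exact ToWAux.SS_mul hnbr hM (m+1) (t+1)
              push_cast at h1 h3
              nlinarith
            have := mul_le_mul_of_nonneg_right hdiv (le_of_lt hpos)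
            rwa [div_mul_cancel₀ _ hpos.ne'] at this
          have hx1 := ToWAux.le_SS hnbr hM (m+1) x
          have hx2 := ToWAux.II_le hnbr hM (m+1) x
          have ho := hosc (m+1)
          rw [abs_le]
          push_cast
          constructor <;> nlinarith
      have h := abs_le.1 hgv
      rw [abs_le]
      constructor <;> linarith
    · exact ⟨0, fun u₀ _ => ⟨0, fun n x => (hV ⟨x⟩).elim⟩⟩
  · push_neg at hnbr
    obtain ⟨x₀, hx₀⟩ := hnbr
    have hempty : ∀ x : V, {y | adj x y} = (∅ : Set V) := by
      intro x
      ext w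
      simp only [Set.mem_setOf_eq, Set.mem_empty_iff_false, iff_false]
      intro hxw
      obtain ⟨k, hk, hr⟩ := hD₀ x₀ x
      cases k with
      | zero =>
        have hx : x₀ = x := hr
        subst hx
        exact hx₀ w hxw
      | succ k =>
        obtain ⟨z, hz, _⟩ := hr
        exact hx₀ z hz
    refine ⟨0, ?_⟩
    rintro u₀ ⟨B, hB⟩
    refine ⟨max B M, ?_⟩
    intro n x
    cases n with
    | zero =>
      have h0 : gameVal adj f u₀ 0 x = u₀ x := rfl
      rw [h0]
      simpa using (hB x).trans (le_max_left B M)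
    | succ m =>
      have e : gameVal adj f u₀ (m+1) x =
          (sSup (gameVal adj f u₀ m '' {y | adj x y}) +
            sInf (gameVal adj f u₀ m '' {y | adj x y})) / 2 + f x := rfl
      rw [e, hempty x]
      simpa using (hM x).trans (le_max_right B M)
end

section
/- Let G=(V,E) be a finite connected graph with a loop at each vertex, and let f, u₀ : V → ℝ be functions with c_f = 0. Then the sequence (u_n) of tug-of-war game values with terminal payoff u₀ and running payoff f converges (uniformly, since V is finite) to a function u : V → ℝ. -/
open Set Filter Topology
open scoped ENNReal Classical

namespace TOW

variable {V : Type*} [Fintype V] {adj : V → V → Prop}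

/-- The one-step tug-of-war operator. -/
noncomputable def Top (adj : V → V → Prop) (f : V → ℝ) (u : V → ℝ) : V → ℝ := fun x =>
  (sSup (u '' {y | adj x y}) + sInf (u '' {y | adj x y})) / 2 + f x

lemma gameVal_succ (adj : V → V → Prop) (f u₀ : V → ℝ) (n : ℕ) :
    gameVal adj f u₀ (n + 1) = Top adj f (gameVal adj f u₀ n) := rfl

lemma img_ne (hloops : ∀ x, adj x x) (u : V → ℝ) (x : V) : (u '' {y | adj x y}).Nonempty :=
  ⟨u x, x, hloops x, rfl⟩

lemma img_fin (u : V → ℝ) (x : V) : (u '' {y | adj x y}).Finite :=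
  (Set.toFinite _).image u

lemma le_sup (u : V → ℝ) {x y : V} (h : adj x y) : u y ≤ sSup (u '' {y | adj x y}) :=
  le_csSup (img_fin u x).bddAbove (mem_image_of_mem u h)

lemma inf_le (u : V → ℝ) {x y : V} (h : adj x y) : sInf (u '' {y | adj x y}) ≤ u y :=
  csInf_le (img_fin u x).bddBelow (mem_image_of_mem u h)

lemma sup_le' (hloops : ∀ x, adj x x) (u : V → ℝ) {x : V} {c : ℝ}
    (h : ∀ y, adj x y → u y ≤ c) : sSup (u '' {y | adj x y}) ≤ c :=
  csSup_le (img_ne hloops u x) (by rintro t ⟨y, hy, rfl⟩; exact h y hy)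

lemma le_inf' (hloops : ∀ x, adj x x) (u : V → ℝ) {x : V} {c : ℝ}
    (h : ∀ y, adj x y → c ≤ u y) : c ≤ sInf (u '' {y | adj x y}) :=
  le_csInf (img_ne hloops u x) (by rintro t ⟨y, hy, rfl⟩; exact h y hy)

lemma sup_mem (hloops : ∀ x, adj x x) (u : V → ℝ) (x : V) :
    ∃ y, adj x y ∧ sSup (u '' {y | adj x y}) = u y := by
  obtain ⟨y, hy, h⟩ := (img_ne hloops u x).csSup_mem (img_fin u x)
  exact ⟨y, hy, h.symm⟩

lemma inf_mem (hloops : ∀ x, adj x x) (u : V → ℝ) (x : V) :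
    ∃ y, adj x y ∧ sInf (u '' {y | adj x y}) = u y := by
  obtain ⟨y, hy, h⟩ := (img_ne hloops u x).csInf_mem (img_fin u x)
  exact ⟨y, hy, h.symm⟩

lemma sup_le_sup_add (hloops : ∀ x, adj x x) (u v : V → ℝ) (x : V) {c : ℝ}
    (h : ∀ y, u y ≤ v y + c) :
    sSup (u '' {y | adj x y}) ≤ sSup (v '' {y | adj x y}) + c :=
  sup_le' hloops u fun y hy => (h y).trans (add_le_add_left (le_sup v hy) c)

lemma inf_le_inf_add (hloops : ∀ x, adj x x) (u v : V → ℝ) (x : V) {c : ℝ}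
    (h : ∀ y, u y ≤ v y + c) :
    sInf (u '' {y | adj x y}) ≤ sInf (v '' {y | adj x y}) + c := by
  obtain ⟨y, hy, hval⟩ := inf_mem hloops v x
  calc sInf (u '' {y | adj x y}) ≤ u y := inf_le u hy
    _ ≤ v y + c := h y
    _ = sInf (v '' {y | adj x y}) + c := by rw [hval]

lemma Top_le_Top_add (hloops : ∀ x, adj x x) (f u v : V → ℝ) (x : V) {c : ℝ}
    (h : ∀ y, u y ≤ v y + c) :
    Top adj f u x ≤ Top adj f v x + c := by
  have h1 := sup_le_sup_add hloops u v x h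
  have h2 := inf_le_inf_add hloops u v x h
  simp only [Top]
  linarith

lemma sup_neg (hloops : ∀ x, adj x x) (u : V → ℝ) (x : V) :
    sSup ((fun y => -u y) '' {y | adj x y}) = -sInf (u '' {y | adj x y}) := by
  apply le_antisymm
  · exact sup_le' hloops _ fun y hy => neg_le_neg (inf_le u hy)
  · obtain ⟨y, hy, hval⟩ := inf_mem hloops u x
    rw [hval]
    exact le_sup (fun y => -u y) hy

lemma inf_neg (hloops : ∀ x, adj x x) (u : V → ℝ) (x : V) :
    sInf ((fun y => -u y) '' {y | adj x y}) = -sSup (u '' {y | adj x y}) := by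
  apply le_antisymm
  · obtain ⟨y, hy, hval⟩ := sup_mem hloops u x
    rw [hval]
    exact inf_le (fun y => -u y) hy
  · exact le_inf' hloops _ fun y hy => neg_le_neg (le_sup u hy)

lemma Top_neg (hloops : ∀ x, adj x x) (f u : V → ℝ) :
    Top adj (fun x => -f x) (fun x => -u x) = fun x => -(Top adj f u x) := by
  funext x
  simp only [Top, sup_neg hloops u x, inf_neg hloops u x]
  ring

/-- Key lemma: for a bounded orbit of the tug-of-war operator on a graph with loops,
the maximal one-step increment eventually drops below any positive `δ`. -/
lemma crux [Nonempty V] (hloops : ∀ x, adj x x) (f : V → ℝ) (u : ℕ → V → ℝ)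
    (hrec : ∀ n, u (n + 1) = Top adj f (u n)) (B : ℝ) (hB : ∀ n x, |u n x| ≤ B)
    {δ : ℝ} (hδ : 0 < δ) : ∃ N, ∀ n ≥ N, ∀ x, u (n + 1) x - u n x ≤ δ := by
  set a : ℕ → ℝ := fun n => Finset.univ.sup' Finset.univ_nonempty
    (fun x => u (n + 1) x - u n x) with ha_def
  have ha_le : ∀ n x, u (n + 1) x - u n x ≤ a n := by
    intro n x
    rw [ha_def]
    exact Finset.le_sup' (fun x => u (n + 1) x - u n x) (Finset.mem_univ x)
  have ha_mem : ∀ n, ∃ x, a n = u (n + 1) x - u n x := by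
    intro n
    obtain ⟨x, _, h⟩ := Finset.exists_mem_eq_sup' Finset.univ_nonempty
      (fun x => u (n + 1) x - u n x)
    exact ⟨x, by rw [ha_def]; exact h⟩
  have hstep : ∀ n, a (n + 1) ≤ a n := by
    intro n
    rw [ha_def]
    apply Finset.sup'_le
    intro x _
    have h := Top_le_Top_add hloops f (u (n + 1)) (u n) x (c := a n) (fun y => by linarith [ha_le n y])
    rw [← hrec n, ← hrec (n + 1)] at h
    linarith
  have hanti : Antitone a := antitone_nat_of_succ_le hstep
  by_contra hcon
  push_neg at hcon
  have hδa : ∀ n, δ < a n := by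
    intro n
    obtain ⟨m, hm, x, hx⟩ := hcon n
    exact lt_of_lt_of_le hx ((ha_le m x).trans (hanti hm))
  have hbdd : BddBelow (Set.range a) := ⟨δ, by rintro t ⟨n, rfl⟩; exact (hδa n).le⟩
  set A := ⨅ n, a n with hA_def
  have hA : δ ≤ A := le_ciInf fun n => (hδa n).le
  have hApos : 0 < A := lt_of_lt_of_le hδ hA
  have hAle : ∀ n, A ≤ a n := fun n => ciInf_le hbdd n
  obtain ⟨K, hK⟩ := exists_nat_gt ((4 * B + 1) / A)
  have hKA : 4 * B + 1 < K * A := by rw [div_lt_iff₀ hApos] at hK; exact hK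
  set ε : ℝ := A / (2 * (3 * 2 ^ K + 2)) with hε_def
  have hεpos : 0 < ε := by positivity
  have hEε : (3 * 2 ^ K + 2) * ε = A / 2 := by
    rw [hε_def]; field_simp
  obtain ⟨N, hN⟩ : ∃ N, a N < A + ε := exists_lt_of_ciInf_lt (by linarith)
  have hek : ∀ k, N ≤ k → ∀ y, u (k + 1) y - u k y ≤ A + ε := fun k hk y =>
    (ha_le k y).trans ((hanti hk).trans hN.le)
  -- single backward step
  have step : ∀ k, N ≤ k → ∀ x (η : ℝ), A - η ≤ u (k + 1 + 1) x - u (k + 1) x →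
      ∃ y, adj x y ∧ A - (2 * η + ε) ≤ u (k + 1) y - u k y ∧
        u (k + 1) y ≤ u (k + 1) x + (2 * η + 2 * ε) := by
    intro k hk x η hx
    obtain ⟨y, hyadj, hymin⟩ := inf_mem hloops (u k) x
    have h2 : u (k + 1 + 1) x = (sSup (u (k + 1) '' {y | adj x y}) +
        sInf (u (k + 1) '' {y | adj x y})) / 2 + f x := by
      rw [hrec (k + 1)]; rfl
    have h1 : u (k + 1) x = (sSup (u k '' {y | adj x y}) +
        sInf (u k '' {y | adj x y})) / 2 + f x := by
      rw [hrec k]; rfl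
    have hP : sSup (u (k + 1) '' {y | adj x y}) ≤ sSup (u k '' {y | adj x y}) + (A + ε) :=
      sup_le_sup_add hloops _ _ x (c := A + ε) (fun y => by linarith [hek k hk y])
    have hy1 : sInf (u (k + 1) '' {y | adj x y}) ≤ u (k + 1) y := inf_le _ hyadj
    have hyi : sInf (u (k + 1) '' {y | adj x y}) ≤ u (k + 1) x := inf_le _ (hloops x)
    have hyk : u (k + 1) y - u k y ≤ A + ε := hek k hk y
    exact ⟨y, hyadj, by linarith, by linarith⟩
  -- the backward chain
  have chain : ∀ j, j ≤ K → ∃ x,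
      A - (2 ^ j - 1) * ε ≤ u (N + (K - j) + 1) x - u (N + (K - j)) x ∧
      u (N + (K - j) + 1) x ≤ B - (j : ℝ) * (A / 2) := by
    intro j
    induction j with
    | zero =>
      intro _
      obtain ⟨x, hx⟩ := ha_mem (N + K)
      rw [Nat.sub_zero]
      refine ⟨x, ?_, ?_⟩
      · simp only [pow_zero, sub_self, zero_mul, sub_zero]
        rw [← hx] at *
        exact (hAle (N + K)).trans (le_of_eq rfl)
      · have := (abs_le.mp (hB (N + K + 1) x)).2
        simpa using this
    | succ j ih =>
      intro hj1
      have hj : j ≤ K := Nat.le_of_succ_le hj1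
      obtain ⟨x, hx1, hx2⟩ := ih hj
      set M := K - (j + 1) with hM_def
      have e1 : N + (K - j) = N + M + 1 := by omega
      rw [e1] at hx1 hx2
      obtain ⟨y, hyadj, hy1, hy2⟩ := step (N + M) (Nat.le_add_right N M) x ((2 ^ j - 1) * ε) hx1
      have hpow : (2 : ℝ) ^ j ≤ 2 ^ K := pow_le_pow_right₀ one_le_two hj
      have hpows : (2 : ℝ) ^ (j + 1) = 2 * 2 ^ j := by rw [pow_succ]; ring
      refine ⟨y, ?_, ?_⟩
      · rw [hpows]
        linarith
      · -- value bound
        have hux : u (N + M + 1) x ≤ (B - (j : ℝ) * (A / 2)) - (A - (2 ^ j - 1) * ε) := by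
          linarith
        have hcoef : 3 * ((2 : ℝ) ^ j - 1) * ε + 2 * ε ≤ A / 2 := by
          nlinarith [hεpos.le, hpow, hEε]
        push_cast
        linarith
  obtain ⟨x, _, hxval⟩ := chain K (le_refl K)
  rw [Nat.sub_self] at hxval
  have hlb := (abs_le.mp (hB (N + 0 + 1) x)).1
  linarith

end TOW

theorem tug_of_war_convergence_finite_loops' {V : Type*} [Fintype V]
    (adj : V → V → Prop) (hsymm : Symmetric adj) (hloops : ∀ x, adj x x)
    (f u₀ : V → ℝ) (hc : ∃ C : ℝ, ∀ (n : ℕ) (x : V),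
      |gameVal adj f (fun _ => (0:ℝ)) n x - n * 0| ≤ C) :
    ∃ u : V → ℝ, TendstoUniformly (fun n => gameVal adj f u₀ n) u atTop := by
  classical
  cases isEmpty_or_nonempty V with
  | inl hemp =>
    exact ⟨fun _ => 0, Metric.tendstoUniformly_iff.mpr fun ε hε =>
      Filter.Eventually.of_forall fun n x => (IsEmpty.false x).elim⟩
  | inr hne =>
    obtain ⟨C, hC⟩ := hc
    set gv := gameVal adj f u₀ with hgv_def
    set v := gameVal adj f (fun _ => (0 : ℝ)) with hv_def
    have hgvrec : ∀ n, gv (n + 1) = TOW.Top adj f (gv n) := fun n => rfl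
    have hvrec : ∀ n, v (n + 1) = TOW.Top adj f (v n) := fun n => rfl
    have hCv : ∀ n x, |v n x| ≤ C := by
      intro n x
      have := hC n x
      simpa using this
    set C₂ := Finset.univ.sup' Finset.univ_nonempty (fun x => |u₀ x|) with hC2_def
    have hC2le : ∀ x, |u₀ x| ≤ C₂ := by
      intro x
      rw [hC2_def]
      exact Finset.le_sup' (fun x => |u₀ x|) (Finset.mem_univ x)
    have hclose : ∀ n x, |gv n x - v n x| ≤ C₂ := by
      intro n
      induction n with
      | zero =>
        intro x
        have : gv 0 x - v 0 x = u₀ x := by simp [hgv_def, hv_def, gameVal]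
        rw [this]
        exact hC2le x
      | succ n ih =>
        intro x
        rw [abs_le]
        constructor
        · have h := TOW.Top_le_Top_add hloops f (v n) (gv n) x (c := C₂)
            (fun y => by have := abs_le.mp (ih y); linarith)
          rw [← hgvrec n, ← hvrec n] at h
          linarith
        · have h := TOW.Top_le_Top_add hloops f (gv n) (v n) x (c := C₂)
            (fun y => by have := abs_le.mp (ih y); linarith)
          rw [← hgvrec n, ← hvrec n] at h
          linarith
    set B := C + C₂ with hB_def
    have hB : ∀ n x, |gv n x| ≤ B := by
      intro n x
      calc |gv n x| = |(gv n x - v n x) + v n x| := by ring_nf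
        _ ≤ |gv n x - v n x| + |v n x| := abs_add_le _ _
        _ ≤ C₂ + C := add_le_add (hclose n x) (hCv n x)
        _ = B := by rw [hB_def]; ring
    have hup : ∀ δ : ℝ, 0 < δ → ∃ N, ∀ n ≥ N, ∀ x, gv (n + 1) x - gv n x ≤ δ :=
      fun δ hδ => TOW.crux hloops f gv hgvrec B hB hδ
    have hdn : ∀ δ : ℝ, 0 < δ → ∃ N, ∀ n ≥ N, ∀ x, -δ ≤ gv (n + 1) x - gv n x := by
      intro δ hδ
      have hrec' : ∀ n, (fun x => -gv (n + 1) x) =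
          TOW.Top adj (fun x => -f x) (fun x => -gv n x) := by
        intro n
        rw [TOW.Top_neg hloops f (gv n)]
        funext x
        rw [hgvrec n]
      obtain ⟨N, hN⟩ := TOW.crux hloops (fun x => -f x) (fun n x => -gv n x)
        (fun n => hrec' n) B (fun n x => by simpa using hB n x) hδ
      exact ⟨N, fun n hn x => by have := hN n hn x; linarith⟩
    have hres : ∀ δ : ℝ, 0 < δ → ∃ N, ∀ n ≥ N, dist (gv (n + 1)) (gv n) ≤ δ := by
      intro δ hδ
      obtain ⟨N1, h1⟩ := hup δ hδ
      obtain ⟨N2, h2⟩ := hdn δ hδ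
      refine ⟨max N1 N2, fun n hn => (dist_pi_le_iff hδ.le).mpr fun x => ?_⟩
      rw [Real.dist_eq, abs_le]
      exact ⟨h2 n (le_trans (le_max_right _ _) hn) x, h1 n (le_trans (le_max_left _ _) hn) x⟩
    have hs : IsCompact (Set.pi Set.univ fun _ : V => Icc (-B) B) :=
      isCompact_univ_pi fun _ => isCompact_Icc
    have hmem : ∀ n, gv n ∈ Set.pi Set.univ fun _ : V => Icc (-B) B := by
      intro n
      rw [Set.mem_univ_pi]
      intro x
      exact abs_le.mp (hB n x)
    obtain ⟨w, -, φ, hφ, hconv⟩ := hs.tendsto_subseq hmem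
    have hTne : ∀ p q : V → ℝ, dist (TOW.Top adj f p) (TOW.Top adj f q) ≤ dist p q := by
      intro p q
      refine (dist_pi_le_iff dist_nonneg).mpr fun x => ?_
      rw [Real.dist_eq, abs_le]
      have hpq : ∀ y : V, |p y - q y| ≤ dist p q := fun y => by
        have := dist_le_pi_dist p q y
        rwa [Real.dist_eq] at this
      have h1 := TOW.Top_le_Top_add hloops f p q x (c := dist p q)
        (fun y => by have := abs_le.mp (hpq y); linarith)
      have h2 := TOW.Top_le_Top_add hloops f q p x (c := dist p q)
        (fun y => by have := abs_le.mp (hpq y); linarith)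
      exact ⟨by linarith, by linarith⟩
    have hwdist : Tendsto (fun k => dist (gv (φ k)) w) atTop (𝓝 0) :=
      tendsto_iff_dist_tendsto_zero.mp hconv
    have hdist0 : Tendsto (fun k => dist (gv (φ k + 1)) (gv (φ k))) atTop (𝓝 0) := by
      rw [Metric.tendsto_atTop]
      intro ε hε
      obtain ⟨N, hN⟩ := hres (ε / 2) (by linarith)
      refine ⟨N, fun k hk => ?_⟩
      have hφk : N ≤ φ k := le_trans hk hφ.le_apply
      have hd := hN (φ k) hφk
      have : dist (dist (gv (φ k + 1)) (gv (φ k))) 0 = dist (gv (φ k + 1)) (gv (φ k)) := by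
        rw [Real.dist_eq, sub_zero, abs_of_nonneg dist_nonneg]
      rw [this]
      linarith
    have h1 : Tendsto (fun k => gv (φ k + 1)) atTop (𝓝 (TOW.Top adj f w)) := by
      rw [tendsto_iff_dist_tendsto_zero]
      refine squeeze_zero (fun k => dist_nonneg) (fun k => ?_) hwdist
      rw [hgvrec (φ k)]
      exact hTne _ _
    have h2 : Tendsto (fun k => gv (φ k + 1)) atTop (𝓝 w) := by
      rw [tendsto_iff_dist_tendsto_zero]
      refine squeeze_zero (fun k => dist_nonneg)
        (fun k => dist_triangle (gv (φ k + 1)) (gv (φ k)) w) ?_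
      simpa using hdist0.add hwdist
    have hTw : TOW.Top adj f w = w := tendsto_nhds_unique h1 h2
    have hr : ∀ n, dist (gv (n + 1)) w ≤ dist (gv n) w := by
      intro n
      calc dist (gv (n + 1)) w = dist (TOW.Top adj f (gv n)) (TOW.Top adj f w) := by
            rw [hgvrec n, hTw]
        _ ≤ dist (gv n) w := hTne _ _
    have hranti : Antitone (fun n => dist (gv n) w) := antitone_nat_of_succ_le hr
    refine ⟨w, Metric.tendstoUniformly_iff.mpr ?_⟩
    intro ε hε
    obtain ⟨K, hK⟩ := (Metric.tendsto_atTop.mp hwdist) ε hε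
    have hKd : dist (gv (φ K)) w < ε := by
      have := hK K le_rfl
      rwa [Real.dist_eq, sub_zero, abs_of_nonneg dist_nonneg] at this
    rw [eventually_atTop]
    refine ⟨φ K, fun n hn x => ?_⟩
    calc dist (w x) (gv n x) = dist (gv n x) (w x) := dist_comm _ _
      _ ≤ dist (gv n) w := dist_le_pi_dist _ _ x
      _ ≤ dist (gv (φ K)) w := hranti hn
      _ < ε := hKd


/-- On a finite connected graph with a loop at each vertex, if `c_f = 0`
then the sequence of game values with terminal payoff `u₀` and running payoff `f`
converges uniformly. -/
theorem tug_of_war_convergence_finite_loops {V : Type*} [Fintype V]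
    (adj : V → V → Prop) (hsymm : Symmetric adj) (hloops : ∀ x, adj x x)
    (hconn : ∀ x y : V, ∃ n : ℕ, ReachesIn adj n x y)
    (f u₀ : V → ℝ) (hc : IsLTA adj f 0) :
    ∃ u : V → ℝ, TendstoUniformly (fun n => gameVal adj f u₀ n) u atTop := by
  exact tug_of_war_convergence_finite_loops' adj hsymm hloops f u₀ hc
end

section
/- Let G=(V,E) be a finite connected graph (loops allowed) and f : V → ℝ a function. Then the equation u(x) − (1/2)(min_{y∼x} u(y) + max_{y∼x} u(y)) = f(x) for all x ∈ V has a solution u : V → ℝ if and only if c_f = 0. -/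
open Set Filter Topology
open scoped ENNReal Classical

/-! ### auxiliary lemmas -/

lemma eps_le {a b : ℝ} (h : ∀ ε : ℝ, 0 < ε → a ≤ b + ε) : a ≤ b := by
  by_contra hlt
  push_neg at hlt
  have := h ((a - b) / 2) (by linarith)
  linarith

lemma nat_infinite_unbdd {s : Set ℕ} (hs : s.Infinite) (k : ℕ) : ∃ k' ∈ s, k ≤ k' := by
  by_contra h
  push_neg at h
  exact hs (Set.Finite.subset (Set.finite_Iio k) (fun n hn => (h n hn)))

lemma pigeon {V : Type*} [Fintype V] (y : ℕ → V) :
    ∃ v : V, ∀ k : ℕ, ∃ k' ≥ k, y k' = v := by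
  obtain ⟨v, hv⟩ := Finite.exists_infinite_fiber y
  refine ⟨v, fun k => ?_⟩
  obtain ⟨k', hk's, hk'⟩ := nat_infinite_unbdd (Set.infinite_coe_iff.mp hv) k
  exact ⟨k', hk', hk's⟩

set_option linter.unusedSectionVars false

section helpers

variable {V : Type*} [Fintype V] (adj : V → V → Prop) (f : V → ℝ)

/-- The tug-of-war operator. -/
noncomputable def Tg (u : V → ℝ) (x : V) : ℝ :=
  (sSup (u '' {y | adj x y}) + sInf (u '' {y | adj x y})) / 2 + f x

lemma gameVal_succ (u₀ : V → ℝ) (n : ℕ) :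
    gameVal adj f u₀ (n + 1) = Tg adj f (gameVal adj f u₀ n) := rfl

variable {adj}

lemma im_ne (hN : ∀ x, ∃ y, adj x y) (u : V → ℝ) (x : V) :
    (u '' {y | adj x y}).Nonempty := by
  obtain ⟨y, hy⟩ := hN x
  exact ⟨u y, Set.mem_image_of_mem u hy⟩

lemma im_bddAbove (u : V → ℝ) (x : V) : BddAbove (u '' {y | adj x y}) :=
  ((Set.toFinite _).image u).bddAbove

lemma im_bddBelow (u : V → ℝ) (x : V) : BddBelow (u '' {y | adj x y}) :=
  ((Set.toFinite _).image u).bddBelow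

lemma sSup_im_le_sSup_im (hN : ∀ x, ∃ y, adj x y) {u v : V → ℝ}
    (h : ∀ y, u y ≤ v y) (x : V) :
    sSup (u '' {y | adj x y}) ≤ sSup (v '' {y | adj x y}) := by
  refine csSup_le (im_ne hN u x) ?_
  rintro a ⟨y, hy, rfl⟩
  exact (h y).trans (le_csSup (im_bddAbove v x) (Set.mem_image_of_mem v hy))

lemma sInf_im_le_sInf_im (hN : ∀ x, ∃ y, adj x y) {u v : V → ℝ}
    (h : ∀ y, u y ≤ v y) (x : V) :
    sInf (u '' {y | adj x y}) ≤ sInf (v '' {y | adj x y}) := by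
  refine le_csInf (im_ne hN v x) ?_
  rintro a ⟨y, hy, rfl⟩
  exact (csInf_le (im_bddBelow u x) (Set.mem_image_of_mem u hy)).trans (h y)

lemma Tg_mono (hN : ∀ x, ∃ y, adj x y) {u v : V → ℝ} (h : ∀ y, u y ≤ v y) (x : V) :
    Tg adj f u x ≤ Tg adj f v x := by
  have h1 := sSup_im_le_sSup_im hN h x
  have h2 := sInf_im_le_sInf_im hN h x
  unfold Tg
  linarith

lemma sSup_im_shift (hN : ∀ x, ∃ y, adj x y) (u : V → ℝ) (c : ℝ) (x : V) :
    sSup ((fun y => u y + c) '' {y | adj x y}) = sSup (u '' {y | adj x y}) + c := by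
  apply le_antisymm
  · refine csSup_le (im_ne hN _ x) ?_
    rintro a ⟨y, hy, rfl⟩
    exact add_le_add_left (le_csSup (im_bddAbove u x) (Set.mem_image_of_mem u hy)) c
  · rw [← le_sub_iff_add_le]
    refine csSup_le (im_ne hN u x) ?_
    rintro a ⟨y, hy, rfl⟩
    rw [le_sub_iff_add_le]
    exact le_csSup (im_bddAbove _ x) (Set.mem_image_of_mem _ hy)

lemma sInf_im_shift (hN : ∀ x, ∃ y, adj x y) (u : V → ℝ) (c : ℝ) (x : V) :
    sInf ((fun y => u y + c) '' {y | adj x y}) = sInf (u '' {y | adj x y}) + c := by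
  apply le_antisymm
  · rw [← sub_le_iff_le_add]
    refine le_csInf (im_ne hN _ x) ?_
    rintro a ⟨y, hy, rfl⟩
    rw [sub_le_iff_le_add]
    exact csInf_le (im_bddBelow _ x) (Set.mem_image_of_mem _ hy)
  · refine le_csInf (im_ne hN _ x) ?_
    rintro a ⟨y, hy, rfl⟩
    exact add_le_add_left (csInf_le (im_bddBelow u x) (Set.mem_image_of_mem u hy)) c

lemma Tg_shift (hN : ∀ x, ∃ y, adj x y) (u : V → ℝ) (c : ℝ) (x : V) :
    Tg adj f (fun y => u y + c) x = Tg adj f u x + c := by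
  unfold Tg
  rw [sSup_im_shift hN u c x, sInf_im_shift hN u c x]
  ring

lemma gv_mono (hN : ∀ x, ∃ y, adj x y) {u v : V → ℝ} (h : ∀ y, u y ≤ v y) (n : ℕ) (x : V) :
    gameVal adj f u n x ≤ gameVal adj f v n x := by
  induction n generalizing x with
  | zero => exact h x
  | succ n ih =>
    rw [gameVal_succ, gameVal_succ]
    exact Tg_mono f hN ih x

lemma gv_shift (hN : ∀ x, ∃ y, adj x y) (u : V → ℝ) (c : ℝ) (n : ℕ) (x : V) :
    gameVal adj f (fun y => u y + c) n x = gameVal adj f u n x + c := by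
  induction n generalizing x with
  | zero => rfl
  | succ n ih =>
    rw [gameVal_succ, gameVal_succ]
    have : gameVal adj f (fun y => u y + c) n = fun y => gameVal adj f u n y + c :=
      funext fun y => ih y
    rw [this]
    exact Tg_shift f hN _ c x

lemma gv_iterate (u : V → ℝ) (n : ℕ) :
    gameVal adj f u n = (Tg adj f)^[n] u := by
  induction n with
  | zero => rfl
  | succ n ih => rw [gameVal_succ, ih, Function.iterate_succ_apply']

lemma exists_solution (hN : ∀ x, ∃ y, adj x y) (C : ℝ)
    (hC : ∀ (n : ℕ) (x : V), |gameVal adj f (fun _ => (0:ℝ)) n x| ≤ C) :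
    ∃ w : V → ℝ, ∀ x, Tg adj f w x = w x := by
  set u : ℕ → V → ℝ := gameVal adj f (fun _ => (0:ℝ)) with hu
  have hCl : ∀ n x, -C ≤ u n x := fun n x => (abs_le.mp (hC n x)).1
  have hCu : ∀ n x, u n x ≤ C := fun n x => (abs_le.mp (hC n x)).2
  have hrec : ∀ m, u (m + 1) = Tg adj f (u m) := fun m => gameVal_succ adj f _ m
  -- `s k x = sup_{n ≥ k} u n x`
  set s : ℕ → V → ℝ := fun k x => sSup (Set.range fun n => u (n + k) x) with hs
  have hrangene : ∀ (k : ℕ) (x : V), (Set.range fun n => u (n + k) x).Nonempty :=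
    fun k x => ⟨_, ⟨0, rfl⟩⟩
  have hrbdd : ∀ (k : ℕ) (x : V), BddAbove (Set.range fun n => u (n + k) x) :=
    fun k x => ⟨C, by rintro a ⟨n, rfl⟩; exact hCu _ x⟩
  have hsle : ∀ k x, s k x ≤ C := fun k x =>
    csSup_le (hrangene k x) (by rintro a ⟨n, rfl⟩; exact hCu _ x)
  have hule : ∀ n k x, u (n + k) x ≤ s k x := fun n k x => le_csSup (hrbdd k x) ⟨n, rfl⟩
  have hsge : ∀ k x, -C ≤ s k x := fun k x => (hCl (0 + k) x).trans (hule 0 k x)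
  have hsanti : ∀ (x : V) {k l : ℕ}, k ≤ l → s l x ≤ s k x := by
    intro x k l hkl
    refine csSup_le (hrangene l x) ?_
    rintro a ⟨n, rfl⟩
    refine le_csSup (hrbdd k x) ⟨n + (l - k), ?_⟩
    have h2 : n + (l - k) + k = n + l := by omega
    show u (n + (l - k) + k) x = u (n + l) x
    rw [h2]
  have hTs : ∀ k x, s (k + 1) x ≤ Tg adj f (s k) x := by
    intro k x
    refine csSup_le (hrangene (k + 1) x) ?_
    rintro a ⟨n, rfl⟩
    have h1 : n + (k + 1) = (n + k) + 1 := by omega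
    show u (n + (k + 1)) x ≤ Tg adj f (s k) x
    rw [h1, hrec (n + k)]
    exact Tg_mono f hN (fun y => hule n k y) x
  -- `ub = inf_k s k`
  set ub : V → ℝ := fun x => sInf (Set.range fun k => s k x) with hub
  have hkrne : ∀ x : V, (Set.range fun k => s k x).Nonempty := fun x => ⟨_, ⟨0, rfl⟩⟩
  have hkrbdd : ∀ x : V, BddBelow (Set.range fun k => s k x) :=
    fun x => ⟨-C, by rintro a ⟨k, rfl⟩; exact hsge k x⟩
  have hub_le : ∀ k x, ub x ≤ s k x := fun k x => csInf_le (hkrbdd x) ⟨k, rfl⟩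
  have hub_leC : ∀ x, ub x ≤ C := fun x => (hub_le 0 x).trans (hsle 0 x)
  -- `ub ≤ T ub`
  have hTub : ∀ x, ub x ≤ Tg adj f ub x := by
    intro x
    set a : ℕ → ℝ := fun k => sSup (s k '' {y | adj x y}) with ha
    set b : ℕ → ℝ := fun k => sInf (s k '' {y | adj x y}) with hb
    obtain ⟨y₀, hy₀⟩ := hN x
    have hbge : ∀ k, -C ≤ b k := fun k =>
      le_csInf (im_ne hN (s k) x) (by rintro _ ⟨y, hy, rfl⟩; exact hsge k y)
    have hage : ∀ k, -C ≤ a k := fun k =>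
      (hsge k y₀).trans (le_csSup (im_bddAbove (s k) x) (Set.mem_image_of_mem _ hy₀))
    have hrane : (Set.range a).Nonempty := ⟨_, ⟨0, rfl⟩⟩
    have hrbne : (Set.range b).Nonempty := ⟨_, ⟨0, rfl⟩⟩
    have hrabdd : BddBelow (Set.range a) := ⟨-C, by rintro _ ⟨k, rfl⟩; exact hage k⟩
    have hrbbdd : BddBelow (Set.range b) := ⟨-C, by rintro _ ⟨k, rfl⟩; exact hbge k⟩
    have haanti : ∀ {k l : ℕ}, k ≤ l → a l ≤ a k := fun {k l} h =>
      sSup_im_le_sSup_im hN (fun y => hsanti y h) x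
    have hbanti : ∀ {k l : ℕ}, k ≤ l → b l ≤ b k := fun {k l} h =>
      sInf_im_le_sInf_im hN (fun y => hsanti y h) x
    have key : ∀ k, 2 * ub x ≤ a k + b k + 2 * f x := by
      intro k
      have h1 : s (k + 1) x ≤ Tg adj f (s k) x := hTs k x
      have h2 : ub x ≤ s (k + 1) x := hub_le (k + 1) x
      have h3 : Tg adj f (s k) x = (a k + b k) / 2 + f x := rfl
      linarith [h3 ▸ h1]
    -- sInf (range b) ≤ sInf (ub '' N)
    have hBB : sInf (Set.range b) ≤ sInf (ub '' {y | adj x y}) := by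
      refine le_csInf (im_ne hN ub x) ?_
      rintro _ ⟨y, hy, rfl⟩
      refine le_csInf (hkrne y) ?_
      rintro _ ⟨k, rfl⟩
      exact (csInf_le hrbbdd ⟨k, rfl⟩).trans (csInf_le (im_bddBelow (s k) x)
        (Set.mem_image_of_mem _ hy))
    -- sInf (range a) ≤ sSup (ub '' N)
    have hAA : sInf (Set.range a) ≤ sSup (ub '' {y | adj x y}) := by
      have hmem : ∀ k, ∃ y, adj x y ∧ s k y = a k := by
        intro k
        have h1 : sSup (s k '' {y | adj x y}) ∈ s k '' {y | adj x y} :=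
          Set.Nonempty.csSup_mem (im_ne hN (s k) x) ((Set.toFinite _).image _)
        obtain ⟨y, hy, hEq⟩ := h1
        exact ⟨y, hy, hEq⟩
      choose y hyN hya using hmem
      obtain ⟨t, ht⟩ := pigeon y
      have htN : adj x t := by
        obtain ⟨k', _, hk'⟩ := ht 0
        exact hk' ▸ hyN k'
      have h1 : ∀ k, sInf (Set.range a) ≤ s k t := by
        intro k
        obtain ⟨k', hk'ge, hk'⟩ := ht k
        calc sInf (Set.range a) ≤ a k' := csInf_le hrabdd ⟨k', rfl⟩
          _ = s k' t := by rw [← hya k', hk']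
          _ ≤ s k t := hsanti t hk'ge
      have h2 : sInf (Set.range a) ≤ ub t := by
        refine le_csInf (hkrne t) ?_
        rintro _ ⟨k, rfl⟩
        exact h1 k
      exact h2.trans (le_csSup (im_bddAbove ub x) (Set.mem_image_of_mem ub htN))
    have hgoal : 2 * ub x - 2 * f x ≤
        sSup (ub '' {y | adj x y}) + sInf (ub '' {y | adj x y}) := by
      refine eps_le fun ε hε => ?_
      obtain ⟨_, ⟨k₁, rfl⟩, hk₁⟩ := exists_lt_of_csInf_lt hrane
        (lt_add_of_pos_right (sInf (Set.range a)) (by positivity : (0:ℝ) < ε / 2))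
      obtain ⟨_, ⟨k₂, rfl⟩, hk₂⟩ := exists_lt_of_csInf_lt hrbne
        (lt_add_of_pos_right (sInf (Set.range b)) (by positivity : (0:ℝ) < ε / 2))
      have h1 := key (max k₁ k₂)
      have h2 : a (max k₁ k₂) ≤ a k₁ := haanti (le_max_left _ _)
      have h3 : b (max k₁ k₂) ≤ b k₂ := hbanti (le_max_right _ _)
      linarith
    have h4 : Tg adj f ub x =
        (sSup (ub '' {y | adj x y}) + sInf (ub '' {y | adj x y})) / 2 + f x := rfl
    rw [h4]
    linarith
  -- phase 2 : iterate up from ub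
  set v : ℕ → V → ℝ := fun m => gameVal adj f ub m with hv
  have hvrec : ∀ m, v (m + 1) = Tg adj f (v m) := fun m => gameVal_succ adj f ub m
  have hvmono : ∀ m x, v m x ≤ v (m + 1) x := by
    intro m
    induction m with
    | zero => exact fun x => hTub x
    | succ m ih =>
      intro x
      rw [hvrec (m + 1), hvrec m]
      exact Tg_mono f hN ih x
  have hvmono' : ∀ (x) {m m' : ℕ}, m ≤ m' → v m x ≤ v m' x := by
    intro x m m' h
    exact monotone_nat_of_le_succ (f := fun m => v m x) (fun n => hvmono n x) h
  have hvub : ∀ m x, v m x ≤ 2 * C := by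
    intro m x
    have h1 : ∀ y : V, ub y ≤ (fun _ => (0:ℝ)) y + C := fun y => by
      simpa using hub_leC y
    have h2 : v m x ≤ gameVal adj f (fun y => (fun _ => (0:ℝ)) y + C) m x :=
      gv_mono f hN h1 m x
    rw [gv_shift f hN _ C m x] at h2
    have h3 := hCu m x
    rw [hu] at h3
    linarith
  set w : V → ℝ := fun x => sSup (Set.range fun m => v m x) with hw
  have hwrne : ∀ x : V, (Set.range fun m => v m x).Nonempty := fun x => ⟨_, ⟨0, rfl⟩⟩
  have hwrbdd : ∀ x : V, BddAbove (Set.range fun m => v m x) :=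
    fun x => ⟨2 * C, by rintro _ ⟨m, rfl⟩; exact hvub m x⟩
  have hvw : ∀ m x, v m x ≤ w x := fun m x => le_csSup (hwrbdd x) ⟨m, rfl⟩
  have hwub : ∀ x, w x ≤ 2 * C := fun x =>
    csSup_le (hwrne x) (by rintro _ ⟨m, rfl⟩; exact hvub m x)
  refine ⟨w, fun x => le_antisymm ?_ ?_⟩
  · -- Tg w x ≤ w x
    set a : ℕ → ℝ := fun m => sSup (v m '' {y | adj x y}) with ha
    set b : ℕ → ℝ := fun m => sInf (v m '' {y | adj x y}) with hb
    obtain ⟨y₀, hy₀⟩ := hN x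
    have hale : ∀ m, a m ≤ 2 * C := fun m =>
      csSup_le (im_ne hN (v m) x) (by rintro _ ⟨y, hy, rfl⟩; exact hvub m y)
    have hble : ∀ m, b m ≤ 2 * C := fun m =>
      (csInf_le (im_bddBelow (v m) x) (Set.mem_image_of_mem _ hy₀)).trans (hvub m y₀)
    have hrane : (Set.range a).Nonempty := ⟨_, ⟨0, rfl⟩⟩
    have hrbne : (Set.range b).Nonempty := ⟨_, ⟨0, rfl⟩⟩
    have hrabdd : BddAbove (Set.range a) := ⟨2 * C, by rintro _ ⟨m, rfl⟩; exact hale m⟩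
    have hrbbdd : BddAbove (Set.range b) := ⟨2 * C, by rintro _ ⟨m, rfl⟩; exact hble m⟩
    have hamono : ∀ {m m' : ℕ}, m ≤ m' → a m ≤ a m' := fun {m m'} h =>
      sSup_im_le_sSup_im hN (fun y => hvmono' y h) x
    have hbmono : ∀ {m m' : ℕ}, m ≤ m' → b m ≤ b m' := fun {m m'} h =>
      sInf_im_le_sInf_im hN (fun y => hvmono' y h) x
    have key : ∀ m, a m + b m + 2 * f x ≤ 2 * w x := by
      intro m
      have h1 : Tg adj f (v m) x = (a m + b m) / 2 + f x := rfl
      have h2 : v (m + 1) x ≤ w x := hvw (m + 1) x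
      rw [hvrec m, h1] at h2
      linarith
    have hAA : sSup (w '' {y | adj x y}) ≤ sSup (Set.range a) := by
      refine csSup_le (im_ne hN w x) ?_
      rintro _ ⟨y, hy, rfl⟩
      refine csSup_le (hwrne y) ?_
      rintro _ ⟨m, rfl⟩
      exact (le_csSup (im_bddAbove (v m) x) (Set.mem_image_of_mem _ hy)).trans
        (le_csSup hrabdd ⟨m, rfl⟩)
    have hBB : sInf (w '' {y | adj x y}) ≤ sSup (Set.range b) := by
      have hmem : ∀ m, ∃ y, adj x y ∧ v m y = b m := by
        intro m
        have h1 : sInf (v m '' {y | adj x y}) ∈ v m '' {y | adj x y} :=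
          Set.Nonempty.csInf_mem (im_ne hN (v m) x) ((Set.toFinite _).image _)
        obtain ⟨y, hy, hEq⟩ := h1
        exact ⟨y, hy, hEq⟩
      choose y hyN hyb using hmem
      obtain ⟨t, ht⟩ := pigeon y
      have htN : adj x t := by
        obtain ⟨m', _, hm'⟩ := ht 0
        exact hm' ▸ hyN m'
      have h1 : ∀ m, v m t ≤ sSup (Set.range b) := by
        intro m
        obtain ⟨m', hm'ge, hm'⟩ := ht m
        calc v m t ≤ v m' t := hvmono' t hm'ge
          _ = b m' := by rw [← hyb m', hm']
          _ ≤ sSup (Set.range b) := le_csSup hrbbdd ⟨m', rfl⟩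
      have h2 : w t ≤ sSup (Set.range b) := csSup_le (hwrne t) (by rintro _ ⟨m, rfl⟩; exact h1 m)
      exact (csInf_le (im_bddBelow w x) (Set.mem_image_of_mem w htN)).trans h2
    have hgoal : sSup (w '' {y | adj x y}) + sInf (w '' {y | adj x y}) ≤
        2 * w x - 2 * f x := by
      refine eps_le fun ε hε => ?_
      obtain ⟨_, ⟨m₁, rfl⟩, hm₁⟩ := exists_lt_of_lt_csSup hrane
        (sub_lt_self (sSup (Set.range a)) (by positivity : (0:ℝ) < ε / 2))
      obtain ⟨_, ⟨m₂, rfl⟩, hm₂⟩ := exists_lt_of_lt_csSup hrbne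
        (sub_lt_self (sSup (Set.range b)) (by positivity : (0:ℝ) < ε / 2))
      have h1 := key (max m₁ m₂)
      have h2 : a m₁ ≤ a (max m₁ m₂) := hamono (le_max_left _ _)
      have h3 : b m₂ ≤ b (max m₁ m₂) := hbmono (le_max_right _ _)
      linarith
    have h4 : Tg adj f w x =
        (sSup (w '' {y | adj x y}) + sInf (w '' {y | adj x y})) / 2 + f x := rfl
    rw [h4]
    linarith
  · -- w x ≤ Tg w x
    refine csSup_le (hwrne x) ?_
    rintro _ ⟨m, rfl⟩
    calc v m x ≤ v (m + 1) x := hvmono m x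
      _ = Tg adj f (v m) x := by rw [hvrec m]
      _ ≤ Tg adj f w x := Tg_mono f hN (fun y => hvw m y) x

end helpers

/-- On a finite connected graph (loops allowed), the equation
`u(x) − (1/2)(min_{y∼x} u(y) + max_{y∼x} u(y)) = f(x)` has a solution iff `c_f = 0`. -/
theorem discrete_infinity_laplace_solvable_iff {V : Type*} [Fintype V]
    (adj : V → V → Prop) (hsymm : Symmetric adj)
    (hconn : ∀ x y : V, ∃ n : ℕ, ReachesIn adj n x y) (f : V → ℝ) :
    (∃ u : V → ℝ, ∀ x : V,
        u x - (sInf (u '' {y | adj x y}) + sSup (u '' {y | adj x y})) / 2 = f x) ↔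
      IsLTA adj f 0 := by
  by_cases hN : ∀ x, ∃ y, adj x y
  · constructor
    · rintro ⟨u, hu⟩
      have hfix : Tg adj f u = u := by
        funext x
        have h := hu x
        show (sSup (u '' {y | adj x y}) + sInf (u '' {y | adj x y})) / 2 + f x = u x
        linarith
      have hgv : ∀ n, gameVal adj f u n = u := by
        intro n
        rw [gv_iterate]
        exact Function.iterate_fixed hfix n
      obtain ⟨C, hC⟩ := Finite.exists_le (fun x => |u x|)
      refine ⟨2 * C, fun n x => ?_⟩
      have h1 : gameVal adj f (fun y => u y + (-C)) n x ≤ gameVal adj f (fun _ => (0:ℝ)) n x := by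
        refine gv_mono f hN (fun y => ?_) n x
        have := abs_le.mp (hC y)
        linarith
      have h2 : gameVal adj f (fun _ => (0:ℝ)) n x ≤ gameVal adj f (fun y => u y + C) n x := by
        refine gv_mono f hN (fun y => ?_) n x
        have := abs_le.mp (hC y)
        linarith
      rw [gv_shift f hN u (-C) n x, hgv n] at h1
      rw [gv_shift f hN u C n x, hgv n] at h2
      have hux := abs_le.mp (hC x)
      rw [mul_zero, sub_zero, abs_le]
      constructor <;> linarith
    · rintro ⟨C, hC⟩
      have hC' : ∀ (n : ℕ) (x : V), |gameVal adj f (fun _ => (0:ℝ)) n x| ≤ C := by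
        intro n x
        have := hC n x
        rwa [mul_zero, sub_zero] at this
      obtain ⟨w, hw⟩ := exists_solution f hN C hC'
      refine ⟨w, fun x => ?_⟩
      have h := hw x
      have h2 : (sSup (w '' {y | adj x y}) + sInf (w '' {y | adj x y})) / 2 + f x = w x := h
      linarith
  · -- degenerate case : an isolated vertex, so V = {x₀}
    push_neg at hN
    obtain ⟨x₀, hx₀⟩ := hN
    have hall : ∀ z : V, z = x₀ := by
      intro z
      obtain ⟨n, hr⟩ := hconn x₀ z
      cases n with
      | zero => exact hr.symm
      | succ n =>
        obtain ⟨z', hz', _⟩ := hr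
        exact absurd hz' (hx₀ z')
    have hempty : ∀ x : V, {y | adj x y} = (∅ : Set V) := by
      intro x
      ext y
      simp only [Set.mem_setOf_eq, Set.mem_empty_iff_false, iff_false]
      rw [hall x]
      exact hx₀ y
    have hgv : ∀ (n : ℕ) (x : V), |gameVal adj f (fun _ => (0:ℝ)) n x| ≤ |f x₀| := by
      intro n x
      cases n with
      | zero =>
        show |(0:ℝ)| ≤ |f x₀|
        simp
      | succ n =>
        have : gameVal adj f (fun _ => (0:ℝ)) (n + 1) x =
            (sSup (gameVal adj f (fun _ => (0:ℝ)) n '' {y | adj x y}) +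
              sInf (gameVal adj f (fun _ => (0:ℝ)) n '' {y | adj x y})) / 2 + f x := rfl
        rw [this, hempty x, Set.image_empty, Real.sSup_empty, Real.sInf_empty, hall x]
        norm_num
    constructor
    · intro _
      exact ⟨|f x₀|, fun n x => by rw [mul_zero, sub_zero]; exact hgv n x⟩
    · intro _
      refine ⟨f, fun x => ?_⟩
      rw [hempty x, Set.image_empty, Real.sSup_empty, Real.sInf_empty]
      norm_num
end

section
/- Let (V,d) be a compact length space, f : V → ℝ continuous, and (ε_n) a sequence of positive reals converging to 0. Let (u_n) be any sequence of continuous functions on V satisfying −Δ∞^{ε_n} u_n = f − c_f(ε_n) on V and such that 0 is in the range of u_n for every n. Then (u_n) has a subsequence converging uniformly to a Lipschitz continuous function; moreover, there is a universal constant C (independent of V, f, and the sequence) such that the Lipschitz constant of the limit is at most C · diam(V) · ‖f‖, where diam(V) is the diameter of (V,d) and ‖f‖ = sup_{x∈V} |f(x)|. -/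
open Set Filter Topology
open scoped ENNReal Classical

/-- A compact length space: the (extended) distance between two points is the infimum of
the lengths (total variations) of continuous paths joining them. -/
def IsLengthSpace (V : Type*) [MetricSpace V] : Prop :=
  ∀ x y : V, edist x y = ⨅ γ : Path x y, eVariationOn (fun t => γ t) (Set.univ : Set unitInterval)

/-- The `ε`-discrete infinity Laplacian
`Δ∞^ε u(x) = (max_{B(x,ε)} u + min_{B(x,ε)} u − 2u(x))/ε²`. -/
noncomputable def discLap {V : Type*} [MetricSpace V] (ε : ℝ) (u : V → ℝ) (x : V) : ℝ :=
  (sSup (u '' {y | dist x y ≤ ε}) + sInf (u '' {y | dist x y ≤ ε}) - 2 * u x) / ε ^ 2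

section helpers
variable {V : Type*} [MetricSpace V] [CompactSpace V]

lemma ball_compact (x : V) (ε : ℝ) : IsCompact {y : V | dist x y ≤ ε} :=
  (isClosed_le (continuous_const.dist continuous_id) continuous_const).isCompact

lemma self_mem_ball (x : V) {ε : ℝ} (hε : 0 ≤ ε) : x ∈ {y : V | dist x y ≤ ε} := by
  simp [dist_self, hε]

lemma abs_le_iSup [Nonempty V] {f : V → ℝ} (hf : Continuous f) (x : V) :
    |f x| ≤ ⨆ z : V, |f z| :=
  le_ciSup (isCompact_range (continuous_abs.comp hf)).bddAbove x

lemma abs_lta_le [Nonempty V] {f : V → ℝ} (hf : Continuous f) {ε c : ℝ} (hε : 0 ≤ ε)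
    (h : IsLTA (fun x y : V => dist x y ≤ ε) f c) : |c| ≤ ⨆ z : V, |f z| := by
  set F := ⨆ z : V, |f z| with hFdef
  have hFx : ∀ x : V, |f x| ≤ F := abs_le_iSup hf
  have hbound : ∀ (n : ℕ) (x : V),
      |gameVal (fun x y : V => dist x y ≤ ε) f (fun _ => 0) n x| ≤ n * F := by
    intro n
    induction n with
    | zero => intro x; simp [gameVal]
    | succ n ih =>
      intro x
      set g := gameVal (fun x y : V => dist x y ≤ ε) f (fun _ => 0) n with hg
      have hmem : g x ∈ g '' {y : V | dist x y ≤ ε} := ⟨x, self_mem_ball x hε, rfl⟩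
      have hub : ∀ a ∈ g '' {y : V | dist x y ≤ ε}, a ≤ n * F := by
        rintro a ⟨y, -, rfl⟩; exact (abs_le.mp (ih y)).2
      have hlb : ∀ a ∈ g '' {y : V | dist x y ≤ ε}, -(n * F) ≤ a := by
        rintro a ⟨y, -, rfl⟩; exact (abs_le.mp (ih y)).1
      have h1 : sSup (g '' {y : V | dist x y ≤ ε}) ≤ n * F := csSup_le ⟨_, hmem⟩ hub
      have h2 : -(n * F) ≤ sSup (g '' {y : V | dist x y ≤ ε}) :=
        le_trans (hlb _ hmem) (le_csSup ⟨n * F, hub⟩ hmem)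
      have h3 : -(n * F) ≤ sInf (g '' {y : V | dist x y ≤ ε}) := le_csInf ⟨_, hmem⟩ hlb
      have h4 : sInf (g '' {y : V | dist x y ≤ ε}) ≤ n * F :=
        le_trans (csInf_le ⟨-(n * F), hlb⟩ hmem) (hub _ hmem)
      have h5 : |f x| ≤ F := hFx x
      rw [abs_le] at h5 ⊢
      have hunfold : gameVal (fun x y : V => dist x y ≤ ε) f (fun _ => 0) (n + 1) x
          = (sSup (g '' {y : V | dist x y ≤ ε}) + sInf (g '' {y : V | dist x y ≤ ε})) / 2
            + f x := rfl
      rw [hunfold]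
      push_cast
      constructor <;> linarith
  obtain ⟨C, hC⟩ := h
  have x₀ : V := Classical.arbitrary V
  by_contra hlt
  push_neg at hlt
  obtain ⟨n, hn⟩ := exists_nat_gt (C / (|c| - F))
  have hd : 0 < |c| - F := by linarith
  have h6 : C < n * (|c| - F) := (div_lt_iff₀ hd).mp hn
  have h7 := hC n x₀
  have h8 := hbound n x₀
  have h9 : (n:ℝ) * |c| = |(n:ℝ) * c| := by
    rw [abs_mul, abs_of_nonneg (by positivity : (0:ℝ) ≤ (n:ℝ))]
  have h10 : |(n:ℝ) * c| ≤ |gameVal (fun x y : V => dist x y ≤ ε) f (fun _ => 0) n x₀ - n * c|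
      + |gameVal (fun x y : V => dist x y ≤ ε) f (fun _ => 0) n x₀| := by
    have := abs_sub (gameVal (fun x y : V => dist x y ≤ ε) f (fun _ => 0) n x₀)
      ((n:ℝ) * c)
    rw [abs_sub_comm] at *
    calc |(n:ℝ) * c| = |(n:ℝ)*c - gameVal (fun x y : V => dist x y ≤ ε) f (fun _ => 0) n x₀
        + gameVal (fun x y : V => dist x y ≤ ε) f (fun _ => 0) n x₀| := by ring_nf
      _ ≤ _ := by
          refine (abs_add_le _ _).trans ?_
          rw [abs_sub_comm]
  nlinarith
end helpers

lemma coarsen {W : Type*} [MetricSpace W] {ε : ℝ} (hε : 0 < ε) :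
    ∀ (N : ℕ) (p : ℕ → W) (L : ℝ), (∀ i < N, dist (p i) (p (i + 1)) ≤ ε / 2) →
      (∑ i ∈ Finset.range N, dist (p i) (p (i + 1))) ≤ L →
      ∃ (m : ℕ) (z : ℕ → W), z 0 = p 0 ∧ z m = p N ∧ (∀ i < m, dist (z i) (z (i + 1)) ≤ ε) ∧
        (m : ℝ) * ε ≤ 2 * L + ε := by
  intro N
  induction N using Nat.strong_induction_on with
  | _ N IH =>
    intro p L hmesh hL
    have hL0 : 0 ≤ L := le_trans (Finset.sum_nonneg fun i _ => dist_nonneg) hL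
    by_cases hxy : dist (p 0) (p N) ≤ ε
    · refine ⟨1, fun i => if i = 0 then p 0 else p N, by simp, by simp, ?_, by push_cast; linarith⟩
      intro i hi
      interval_cases i
      simpa using hxy
    · push_neg at hxy
      have hN1 : 1 ≤ N := by
        by_contra h
        push_neg at h
        interval_cases N
        simp [dist_self] at hxy
        linarith
      set P : ℕ → Prop := fun i => dist (p 0) (p i) ≤ ε with hP
      set j := Nat.findGreatest P N with hjdef
      have hp01 : P 1 := by
        show dist (p 0) (p 1) ≤ ε
        have := hmesh 0 hN1
        linarith
      have hj1 : 1 ≤ j := Nat.le_findGreatest hN1 hp01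
      have hjN : j ≤ N := Nat.findGreatest_le N
      have hPj : dist (p 0) (p j) ≤ ε := Nat.findGreatest_spec (P := P) hN1 hp01
      have hjltN : j < N := by
        rcases lt_or_eq_of_le hjN with h | h
        · exact h
        · exfalso; rw [h] at hPj; linarith
      have hPj1 : ε < dist (p 0) (p (j + 1)) := by
        by_contra h
        push_neg at h
        have : j + 1 ≤ j := Nat.le_findGreatest (P := P) (by omega) h
        omega
      -- the prefix has length at least ε/2
      have hpre : ε / 2 ≤ ∑ i ∈ Finset.range j, dist (p i) (p (i + 1)) := by
        have h1 : dist (p 0) (p (j + 1)) ≤ ∑ i ∈ Finset.range (j + 1), dist (p i) (p (i + 1)) :=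
          dist_le_range_sum_dist (fun i => p i) (j + 1)
        rw [Finset.sum_range_succ] at h1
        have h2 : dist (p j) (p (j + 1)) ≤ ε / 2 := hmesh j hjltN
        linarith
      set N' := N - j with hN'
      have hadd : j + N' = N := by omega
      set q : ℕ → W := fun i => p (j + i) with hq
      have hsplit : (∑ i ∈ Finset.range j, dist (p i) (p (i + 1)))
          + ∑ i ∈ Finset.range N', dist (q i) (q (i + 1))
          = ∑ i ∈ Finset.range N, dist (p i) (p (i + 1)) := by
        rw [← Finset.sum_range_add_sum_Ico _ hjN, Finset.sum_Ico_eq_sum_range]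
        rfl
      have hmesh' : ∀ i < N', dist (q i) (q (i + 1)) ≤ ε / 2 := by
        intro i hi
        have h1 : j + i + 1 = j + (i + 1) := by omega
        have := hmesh (j + i) (by omega)
        rw [h1] at this
        exact this
      have hsum' : (∑ i ∈ Finset.range N', dist (q i) (q (i + 1))) ≤ L - ε / 2 := by
        have := hsplit
        linarith
      obtain ⟨m', z', hz0, hzm, hzmesh, hcount⟩ := IH N' (by omega) q (L - ε / 2) hmesh' hsum'
      refine ⟨m' + 1, fun i => if i = 0 then p 0 else z' (i - 1), by simp, ?_, ?_, ?_⟩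
      · show z' m' = p N
        rw [hzm]
        show p (j + N') = p N
        rw [hadd]
      · intro i hi
        rcases Nat.eq_zero_or_pos i with h0 | h0
        · subst h0
          show dist (p 0) (z' 0) ≤ ε
          rw [hz0]
          exact hPj
        · simp only [if_neg (by omega : ¬ i = 0), if_neg (by omega : ¬ (i + 1 = 0))]
          have h1 : i + 1 - 1 = (i - 1) + 1 := by omega
          rw [h1]
          exact hzmesh (i - 1) (by omega)
      · push_cast
        linarith

lemma exists_eps_chain {V : Type*} [MetricSpace V] [CompactSpace V] (hlen : IsLengthSpace V)
    (x y : V) {ε : ℝ} (hε : 0 < ε) :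
    ∃ (m : ℕ) (z : ℕ → V), z 0 = x ∧ z m = y ∧ (∀ i < m, dist (z i) (z (i + 1)) ≤ ε) ∧
      (m : ℝ) * ε ≤ 2 * dist x y + 3 * ε := by
  have h1 : (⨅ γ : Path x y, eVariationOn (fun t => γ t) (Set.univ : Set unitInterval))
      < edist x y + ENNReal.ofReal ε := by
    rw [← hlen x y]
    exact ENNReal.lt_add_right (edist_ne_top x y)
      (by simp [ENNReal.ofReal_pos.mpr hε, ne_of_gt])
  obtain ⟨γ, hγ⟩ := iInf_lt_iff.mp h1
  have huc : UniformContinuous (fun t : unitInterval => γ t) :=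
    CompactSpace.uniformContinuous_of_continuous γ.continuous
  obtain ⟨δ, hδ0, hδ⟩ := Metric.uniformContinuous_iff.mp huc (ε / 2) (half_pos hε)
  set N := ⌈1 / δ⌉₊ + 1 with hNdef
  have hNpos : 0 < (N : ℝ) := by positivity
  have hNd : 1 / (N : ℝ) < δ := by
    have h2 : 1 / δ ≤ (⌈1 / δ⌉₊ : ℝ) := Nat.le_ceil _
    have h3 : 1 / δ < (N : ℝ) := by
      rw [hNdef]; push_cast; linarith
    rw [div_lt_iff₀ hNpos] at *
    calc 1 = δ * (1/δ) := by field_simp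
    _ < δ * N := by
        apply mul_lt_mul_of_pos_left _ hδ0
        calc 1/δ ≤ (⌈1 / δ⌉₊ : ℝ) := h2
        _ < N := by rw [hNdef]; push_cast; linarith
  set t : ℕ → unitInterval := fun i =>
    ⟨min ((i : ℝ) / N) 1, ⟨le_min (by positivity) zero_le_one, min_le_right _ _⟩⟩ with htdef
  have hmono : Monotone t := by
    intro i j hij
    simp only [htdef, Subtype.mk_le_mk]
    have hij' : (i : ℝ) ≤ j := by exact_mod_cast hij
    show min ((i : ℝ) / N) 1 ≤ min ((j : ℝ) / N) 1
    gcongr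
  have ht0 : t 0 = 0 := by
    apply Subtype.ext
    simp [htdef]
  have htN : t N = 1 := by
    apply Subtype.ext
    have : (N : ℝ) / N = 1 := by field_simp
    simp [htdef, this]
  set p : ℕ → V := fun i => γ (t i) with hpdef
  have hp0 : p 0 = x := by rw [hpdef]; simp only [ht0]; exact γ.source
  have hpN : p N = y := by rw [hpdef]; simp only [htN]; exact γ.target
  have hstep : ∀ i, dist (p i) (p (i + 1)) ≤ ε / 2 := by
    intro i
    have hdist : dist (t i) (t (i + 1)) < δ := by
      rw [Subtype.dist_eq, Real.dist_eq]
      have hle : (i : ℝ) / N ≤ ((i : ℝ) + 1) / N := by gcongr <;> linarith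
      have hid : ((i : ℝ) + 1) / N = (i : ℝ) / N + 1 / N := by rw [add_div]
      have hpos : (0:ℝ) < 1 / N := by positivity
      have key1 : min (((i : ℝ) + 1) / N) 1 - min ((i : ℝ) / N) 1 ≤ 1 / N := by
        rcases min_cases (((i : ℝ) + 1) / N) 1 with ⟨h1, h2⟩ | ⟨h1, h2⟩ <;>
          rcases min_cases ((i : ℝ) / N) 1 with ⟨h3, h4⟩ | ⟨h3, h4⟩ <;> rw [h1, h3] <;> linarith
      have key2 : min ((i : ℝ) / N) 1 ≤ min (((i : ℝ) + 1) / N) 1 := by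
        exact min_le_min hle le_rfl
      have habs : |(min ((i : ℝ) / N) 1) - (min (((i : ℝ) + 1) / N) 1)| ≤ 1 / N := by
        rw [abs_sub_comm, abs_of_nonneg (by linarith)]
        exact key1
      calc |(t i : ℝ) - (t (i+1) : ℝ)| = |(min ((i : ℝ) / N) 1) - (min (((i : ℝ) + 1) / N) 1)| := by
            simp only [htdef]; push_cast; ring_nf
      _ ≤ 1 / N := habs
      _ < δ := hNd
    exact le_of_lt (hδ hdist)
  have hsum : (∑ i ∈ Finset.range N, dist (p i) (p (i + 1))) ≤ dist x y + ε := by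
    have h2 := eVariationOn.sum_le (f := fun t : unitInterval => γ t) (n := N) hmono (fun i => mem_univ _)
    have h3 : (∑ i ∈ Finset.range N, edist (p (i + 1)) (p i))
        ≤ ENNReal.ofReal (dist x y + ε) := by
      refine le_trans h2 (le_trans hγ.le ?_)
      rw [ENNReal.ofReal_add dist_nonneg hε.le, edist_dist]
    have h4 : ENNReal.ofReal (∑ i ∈ Finset.range N, dist (p i) (p (i + 1)))
        ≤ ENNReal.ofReal (dist x y + ε) := by
      rw [ENNReal.ofReal_sum_of_nonneg (fun i _ => dist_nonneg)]
      refine le_trans (le_of_eq ?_) h3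
      refine Finset.sum_congr rfl fun i _ => ?_
      rw [edist_dist, dist_comm]
    rw [ENNReal.ofReal_le_ofReal_iff (by positivity)] at h4
    exact h4
  obtain ⟨m, z, hz0, hzm, hzmesh, hcount⟩ := coarsen hε N p (dist x y + ε) (fun i _ => hstep i) hsum
  exact ⟨m, z, by rw [hz0, hp0], by rw [hzm, hpN], hzmesh, by linarith⟩

private lemma osc_arith {osc m k β ε D F : ℝ} (hosc0 : 0 ≤ osc) (hβ : β = 2 * ε ^ 2 * F)
    (hF : 0 ≤ F) (hε : 0 < ε) (hεD : ε ≤ D) (hm5 : m * ε ≤ 5 * D) (hk1 : 10 * D ≤ k * ε)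
    (hk2 : k * ε ≤ 11 * D) (hm0 : 0 ≤ m) (hD : 0 < D)
    (h4 : osc * k ≤ m * (osc + k ^ 2 * β + k * β)) : osc ≤ 440 * D ^ 2 * F := by
  have hβ0 : 0 ≤ β := by rw [hβ]; positivity
  have hkpos : 0 < k := by nlinarith
  have h2m : 2 * m ≤ k := by nlinarith
  have hk10 : 10 ≤ k := by nlinarith
  have h5 : osc * k ≤ m * osc + m * k ^ 2 * β + m * k * β := by linarith [h4]
  have h6 : m * osc ≤ k / 2 * osc := by
    nlinarith [mul_nonneg (by linarith : (0:ℝ) ≤ k - 2 * m) hosc0]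
  have h7 : m * k * β ≤ m * k ^ 2 * β := by
    nlinarith [mul_nonneg (mul_nonneg hm0 hβ0) (by nlinarith : (0:ℝ) ≤ k ^ 2 - k)]
  have h8 : k / 2 * osc ≤ 2 * (m * k ^ 2 * β) := by linarith
  have h9 : osc ≤ 4 * (m * k * β) := by nlinarith [h8, hkpos]
  have h10 : (m * ε) * (k * ε) ≤ 5 * D * (11 * D) := by
    apply mul_le_mul hm5 hk2 (by positivity) (by nlinarith)
  calc osc ≤ 4 * (m * k * β) := h9
  _ = 8 * ((m * ε) * (k * ε)) * F := by rw [hβ]; ring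
  _ ≤ 8 * (5 * D * (11 * D)) * F := by nlinarith [h10, hF]
  _ = 440 * D ^ 2 * F := by ring

private lemma sf_arith {S osc k β ε D F : ℝ} (hS0 : 0 ≤ S) (h1 : k * S ≤ osc + k ^ 2 * β)
    (hoscB : osc ≤ 440 * D ^ 2 * F) (hβ : β = 2 * ε ^ 2 * F) (hk1 : 10 * D ≤ k * ε)
    (hk2 : k * ε ≤ 11 * D) (hε : 0 < ε) (hD : 0 < D) (hF : 0 ≤ F) : S ≤ 69 * D * ε * F := by
  have hkpos : 0 < k := by nlinarith
  have hksq : (k * ε) ^ 2 ≤ (11 * D) ^ 2 := by nlinarith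
  have h2 : k ^ 2 * β ≤ 242 * D ^ 2 * F := by
    have he : k ^ 2 * β = 2 * (k * ε) ^ 2 * F := by rw [hβ]; ring
    rw [he]; nlinarith
  have h3 : k * S ≤ 682 * D ^ 2 * F := by linarith
  have h4 : (k * ε) * S ≤ 682 * D ^ 2 * F * ε := by nlinarith
  have h5 : 10 * D * S ≤ 682 * D ^ 2 * F * ε := by nlinarith
  nlinarith

set_option maxHeartbeats 1000000 in
lemma key_estimate {V : Type*} [MetricSpace V] [CompactSpace V] [Nonempty V]
    (hlen : IsLengthSpace V) {f : V → ℝ} (hf : Continuous f) {ε c : ℝ} (hε : 0 < ε)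
    (hεD : ε ≤ Metric.diam (Set.univ : Set V)) (hc : |c| ≤ ⨆ z : V, |f z|)
    {u : V → ℝ} (hu : Continuous u)
    (heq : ∀ x, -discLap ε u x = f x - c) (x y : V) :
    |u x - u y| ≤ 144 * Metric.diam (Set.univ : Set V) * (⨆ z : V, |f z|) * dist x y
      + 216 * Metric.diam (Set.univ : Set V) * (⨆ z : V, |f z|) * ε := by
  set D := Metric.diam (Set.univ : Set V) with hDdef
  set F := ⨆ z : V, |f z| with hFdef
  have hD : 0 < D := lt_of_lt_of_le hε hεD
  have hFx : ∀ z, |f z| ≤ F := abs_le_iSup hf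
  have hF : 0 ≤ F := le_trans (abs_nonneg _) (hFx (Classical.arbitrary V))
  set β := 2 * ε ^ 2 * F with hβdef
  have hβ : 0 ≤ β := by positivity
  have hBdda : ∀ z : V, BddAbove (u '' {y | dist z y ≤ ε}) :=
    fun z => ((ball_compact z ε).image hu).bddAbove
  have hBddb : ∀ z : V, BddBelow (u '' {y | dist z y ≤ ε}) :=
    fun z => ((ball_compact z ε).image hu).bddBelow
  have hε2 : (ε:ℝ) ^ 2 ≠ 0 := by positivity
  have heq' : ∀ z : V, sSup (u '' {y | dist z y ≤ ε}) + sInf (u '' {y | dist z y ≤ ε})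
      - 2 * u z = ε ^ 2 * (c - f z) := by
    intro z
    have h := heq z
    simp only [discLap] at h
    have h2 : (sSup (u '' {y | dist z y ≤ ε}) + sInf (u '' {y | dist z y ≤ ε}) - 2 * u z) / ε ^ 2
        = c - f z := by linarith
    have h3 := (div_eq_iff hε2).mp h2
    linarith
  set Sf : V → ℝ := fun z => sSup (u '' {y | dist z y ≤ ε}) - u z with hSfdef
  have hS0 : ∀ z, 0 ≤ Sf z := fun z =>
    sub_nonneg.mpr (le_csSup (hBdda z) ⟨z, self_mem_ball z hε.le, rfl⟩)
  have hIeq : ∀ z : V, u z - sInf (u '' {y | dist z y ≤ ε}) = Sf z + ε ^ 2 * (f z - c) := by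
    intro z
    have := heq' z
    simp only [hSfdef]
    ring_nf
    ring_nf at this
    linarith
  have hfc : ∀ z : V, ε ^ 2 * (f z - c) ≤ β ∧ -β ≤ ε ^ 2 * (f z - c) := by
    intro z
    have h1 := hFx z
    have h2 : |f z - c| ≤ 2 * F := by
      calc |f z - c| ≤ |f z| + |c| := abs_sub _ _
      _ ≤ 2 * F := by linarith
    rw [abs_le] at h2
    constructor <;> [skip; skip] <;> rw [hβdef] <;> nlinarith [sq_nonneg ε, hε]
  have hstep : ∀ z w : V, dist z w ≤ ε → |u w - u z| ≤ Sf z + β := by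
    intro z w hd
    have hmem : u w ∈ u '' {y | dist z y ≤ ε} := ⟨w, hd, rfl⟩
    have h1 : u w - u z ≤ Sf z := sub_le_sub_right (le_csSup (hBdda z) hmem) _
    have h2 : sInf (u '' {y | dist z y ≤ ε}) ≤ u w := csInf_le (hBddb z) hmem
    have h3 := hIeq z
    have h4 := (hfc z).1
    rw [abs_le]
    constructor <;> linarith [hS0 z]
  have hmax : ∀ z : V, ∃ w : V, dist z w ≤ ε ∧ u w - u z = Sf z ∧ Sf z - β ≤ Sf w := by
    intro z
    obtain ⟨w, hwB, hwmax⟩ := (ball_compact z ε).exists_isMaxOn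
      ⟨z, self_mem_ball z hε.le⟩ hu.continuousOn
    have hsup : sSup (u '' {y | dist z y ≤ ε}) = u w := by
      apply IsGreatest.csSup_eq
      exact ⟨⟨w, hwB, rfl⟩, by rintro a ⟨b, hb, rfl⟩; exact hwmax hb⟩
    have hzw : dist w z ≤ ε := by rw [dist_comm]; exact hwB
    have h2 : sInf (u '' {y | dist w y ≤ ε}) ≤ u z := csInf_le (hBddb w) ⟨z, hzw, rfl⟩
    have h3 := hIeq w
    have h4 := (hfc w).1
    have hSz : u w - u z = Sf z := by rw [hSfdef]; simp only []; linarith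
    exact ⟨w, hwB, hSz, by linarith⟩
  obtain ⟨a, -, hamax⟩ := isCompact_univ.exists_isMaxOn univ_nonempty hu.continuousOn
  obtain ⟨b, -, hbmin⟩ := isCompact_univ.exists_isMinOn univ_nonempty hu.continuousOn
  set osc := u a - u b with hoscdef
  have hoscb : ∀ z w : V, u z - u w ≤ osc := by
    intro z w
    have h1 : u z ≤ u a := hamax (mem_univ z)
    have h2 : u b ≤ u w := hbmin (mem_univ w)
    linarith
  have hosc0 : 0 ≤ osc := by have := hoscb a a; linarith [hoscb a b, hoscb b b]
  have hgrow : ∀ (z : V) (k : ℕ), ∃ w : V,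
      Sf z - k * β ≤ Sf w ∧ (k : ℝ) * Sf z - (k : ℝ) ^ 2 * β ≤ u w - u z := by
    intro z k
    induction k with
    | zero => exact ⟨z, by simp, by simp⟩
    | succ k ih =>
      obtain ⟨w, hw1, hw2⟩ := ih
      obtain ⟨w', hd, he, hS⟩ := hmax w
      refine ⟨w', by push_cast; linarith, ?_⟩
      push_cast
      nlinarith [hβ, hS0 z]
  have hosck : ∀ (z : V) (k : ℕ), (k : ℝ) * Sf z ≤ osc + (k : ℝ) ^ 2 * β := by
    intro z k
    obtain ⟨w, -, h2⟩ := hgrow z k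
    have := hoscb w z
    linarith
  have hchain : ∀ (z : ℕ → V) (m : ℕ), (∀ i < m, dist (z i) (z (i + 1)) ≤ ε) →
      |u (z 0) - u (z m)| ≤ ∑ i ∈ Finset.range m, (Sf (z i) + β) := by
    intro z m hmesh
    have h1 : dist (u (z 0)) (u (z m)) ≤ ∑ i ∈ Finset.range m, dist (u (z i)) (u (z (i + 1))) :=
      dist_le_range_sum_dist (fun i => u (z i)) m
    rw [Real.dist_eq] at h1
    refine le_trans h1 (Finset.sum_le_sum fun i hi => ?_)
    rw [Real.dist_eq, abs_sub_comm]
    exact hstep (z i) (z (i + 1)) (hmesh i (Finset.mem_range.mp hi))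
  -- the integer k
  set k := ⌈10 * D / ε⌉₊ with hkdef
  have hk1 : 10 * D ≤ (k : ℝ) * ε := by
    have h1 : 10 * D / ε ≤ (k : ℝ) := Nat.le_ceil _
    calc 10 * D = 10 * D / ε * ε := by field_simp
    _ ≤ (k : ℝ) * ε := mul_le_mul_of_nonneg_right h1 hε.le
  have hk2 : (k : ℝ) * ε ≤ 11 * D := by
    have h1 : (k : ℝ) < 10 * D / ε + 1 := Nat.ceil_lt_add_one (by positivity)
    have h2 : (k : ℝ) * ε ≤ (10 * D / ε + 1) * ε := by nlinarith
    calc (k : ℝ) * ε ≤ (10 * D / ε + 1) * ε := h2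
    _ = 10 * D + ε := by field_simp
    _ ≤ 11 * D := by linarith
  have hkpos : (0 : ℝ) < (k:ℝ) := by
    rcases Nat.eq_zero_or_pos k with h | h
    · exfalso; rw [h] at hk1; push_cast at hk1; nlinarith
    · exact_mod_cast h
  -- oscillation bound
  have hoscB : osc ≤ 440 * D ^ 2 * F := by
    obtain ⟨m, z, hz0, hzm, hzmesh, hcount⟩ := exists_eps_chain hlen b a hε
    have hdab : dist b a ≤ D :=
      Metric.dist_le_diam_of_mem isCompact_univ.isBounded (mem_univ b) (mem_univ a)
    have hm5 : (m : ℝ) * ε ≤ 5 * D := by linarith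
    have h1 : osc ≤ ∑ i ∈ Finset.range m, (Sf (z i) + β) := by
      have := hchain z m hzmesh
      rw [hz0, hzm] at this
      rw [abs_sub_comm, abs_of_nonneg (by linarith [hoscb a b] : 0 ≤ u a - u b)] at this
      exact this
    have h2 : ∀ i ∈ Finset.range m, Sf (z i) + β ≤ (osc + (k:ℝ)^2 * β + (k:ℝ) * β) / k := by
      intro i _
      rw [le_div_iff₀ hkpos]
      have := hosck (z i) k
      nlinarith
    have h3 : osc ≤ (m : ℝ) * ((osc + (k:ℝ)^2 * β + (k:ℝ) * β) / k) := by
      refine le_trans h1 (le_trans (Finset.sum_le_sum h2) ?_)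
      rw [Finset.sum_const, Finset.card_range, nsmul_eq_mul]
    have h4 : osc * k ≤ (m : ℝ) * (osc + (k:ℝ)^2 * β + (k:ℝ) * β) := by
      rw [← le_div_iff₀ hkpos]
      calc osc ≤ (m : ℝ) * ((osc + (k:ℝ)^2 * β + (k:ℝ) * β) / k) := h3
      _ = (m : ℝ) * (osc + (k:ℝ)^2 * β + (k:ℝ) * β) / k := by ring
    exact osc_arith hosc0 hβdef hF hε hεD hm5 hk1 hk2 (Nat.cast_nonneg m) hD h4
  -- pointwise bound on Sf
  have hSB : ∀ z : V, Sf z ≤ 69 * D * ε * F := by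
    intro z
    exact sf_arith (hS0 z) (hosck z k) hoscB hβdef hk1 hk2 hε hD hF
  -- final chain
  obtain ⟨m, z, hz0, hzm, hzmesh, hcount⟩ := exists_eps_chain hlen x y hε
  have h1 : |u x - u y| ≤ ∑ i ∈ Finset.range m, (Sf (z i) + β) := by
    have := hchain z m hzmesh
    rw [hz0, hzm] at this
    exact this
  have h2 : ∀ i ∈ Finset.range m, Sf (z i) + β ≤ 71 * D * ε * F := by
    intro i _
    have := hSB (z i)
    have hβle : β ≤ 2 * D * ε * F := by
      rw [hβdef]
      nlinarith
    linarith
  have h3 : |u x - u y| ≤ (m : ℝ) * (71 * D * ε * F) := by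
    refine le_trans h1 (le_trans (Finset.sum_le_sum h2) ?_)
    rw [Finset.sum_const, Finset.card_range, nsmul_eq_mul]
  have h4 : (m : ℝ) * (71 * D * ε * F) = 71 * D * F * ((m:ℝ) * ε) := by ring
  have h5 : (m:ℝ) * ε ≤ 2 * dist x y + 3 * ε := hcount
  have hDF : 0 ≤ D * F := by positivity
  calc |u x - u y| ≤ 71 * D * F * ((m:ℝ) * ε) := by rw [← h4]; exact h3
  _ ≤ 71 * D * F * (2 * dist x y + 3 * ε) := by nlinarith [(Nat.cast_nonneg m : (0:ℝ) ≤ (m:ℝ)), hDF, h5]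
  _ = 142 * D * F * dist x y + 213 * D * F * ε := by ring
  _ ≤ 144 * D * F * dist x y + 216 * D * F * ε := by nlinarith [(dist_nonneg : (0:ℝ) ≤ dist x y), hε.le, hDF]

set_option maxHeartbeats 1000000 in
/-- There is a universal constant `C` such that, on any compact length
space `V`, for positive `ε_n → 0`, any sequence of continuous functions `u_n` with
`−Δ∞^{ε_n} u_n = f − c_f(ε_n)` whose ranges contain `0` has a uniformly convergent
subsequence whose limit is Lipschitz with constant at most `C · diam(V) · ‖f‖`. -/
theorem subsequential_limits_lipschitz :
    ∃ C : ℝ, 0 < C ∧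
      ∀ (V : Type) [MetricSpace V] [CompactSpace V] [Nonempty V],
        IsLengthSpace V →
        ∀ f : V → ℝ, Continuous f →
        ∀ ε : ℕ → ℝ, (∀ n, 0 < ε n) → Tendsto ε atTop (𝓝 0) →
        ∀ c : ℕ → ℝ, (∀ n, IsLTA (fun x y => dist x y ≤ ε n) f (c n)) →
        ∀ u : ℕ → V → ℝ, (∀ n, Continuous (u n)) →
        (∀ (n : ℕ) (x : V), -discLap (ε n) (u n) x = f x - c n) →
        (∀ n, ∃ x, u n x = 0) →
        ∃ (φ : ℕ → ℕ) (w : V → ℝ) (K : ℝ), StrictMono φ ∧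
          TendstoUniformly (fun k => u (φ k)) w atTop ∧
          (∀ x y : V, |w x - w y| ≤ K * dist x y) ∧
          K ≤ C * Metric.diam (Set.univ : Set V) * (⨆ x : V, |f x|) := by
  refine ⟨144, by norm_num, ?_⟩
  intro V _ _ _ hlen f hf ε hεpos hεlim c hlta u hucont heq hzero
  set D := Metric.diam (Set.univ : Set V) with hDdef
  set F := ⨆ z : V, |f z| with hFdef
  have hFx : ∀ z : V, |f z| ≤ F := fun z =>
    le_ciSup (isCompact_range (continuous_abs.comp hf)).bddAbove z
  have hF : 0 ≤ F := le_trans (abs_nonneg _) (hFx (Classical.arbitrary V))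
  rcases eq_or_lt_of_le (Metric.diam_nonneg : 0 ≤ D) with hD0 | hD
  · -- degenerate case : V is a single point
    have hone : ∀ a b : V, a = b := by
      intro a b
      have h1 : dist a b ≤ D :=
        Metric.dist_le_diam_of_mem isCompact_univ.isBounded (mem_univ a) (mem_univ b)
      have h2 : dist a b = 0 := le_antisymm (by rw [hDdef, ← hD0] at h1; exact h1) dist_nonneg
      exact dist_le_zero.mp h2.le
    have huz : ∀ n x, u n x = 0 := by
      intro n x
      obtain ⟨x₀, h0⟩ := hzero n
      rw [hone x x₀, h0]
    refine ⟨id, fun _ => 0, 0, strictMono_id, ?_, by simp, by rw [hDdef, ← hD0]; simp⟩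
    rw [Metric.tendstoUniformly_iff]
    intro η hη
    filter_upwards with k x
    simpa [huz] using hη
  · -- main case
    have hcF : ∀ n, |c n| ≤ F := fun n => abs_lta_le hf (hεpos n).le (hlta n)
    obtain ⟨N₀, hN₀⟩ := eventually_atTop.mp (hεlim.eventually_lt_const hD)
    rw [← hDdef] at hN₀
    set A := 144 * D * F with hAdef
    set Bc := 216 * D * F with hBcdef
    have hA0 : 0 ≤ A := by rw [hAdef]; positivity
    have hBc0 : 0 ≤ Bc := by rw [hBcdef]; positivity
    have hEst : ∀ k (x y : V), |u (N₀ + k) x - u (N₀ + k) y|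
        ≤ A * dist x y + Bc * ε (N₀ + k) := by
      intro k x y
      exact key_estimate hlen hf (hεpos _) (hN₀ _ (Nat.le_add_right _ _)).le (hcF _)
        (hucont _) (heq _) x y
    have hdistD : ∀ x y : V, dist x y ≤ D := fun x y =>
      Metric.dist_le_diam_of_mem isCompact_univ.isBounded (mem_univ x) (mem_univ y)
    set R := A * D + 2 * Bc * D with hRdef
    have hubd : ∀ k (x : V), |u (N₀ + k) x| ≤ R := by
      intro k x
      obtain ⟨x₀, h0⟩ := hzero (N₀ + k)
      have h1 := hEst k x x₀
      rw [h0, sub_zero] at h1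
      have h2 := hdistD x x₀
      have h3 : ε (N₀ + k) ≤ D := (hN₀ _ (Nat.le_add_right _ _)).le
      rw [hRdef]
      nlinarith [abs_nonneg (u (N₀ + k) x)]
    -- McShane regularization
    set v : ℕ → V → ℝ := fun k x => ⨅ y : V, (u (N₀ + k) y + A * dist x y) with hvdef
    have hbdd : ∀ k (x : V), BddBelow (range fun y : V => u (N₀ + k) y + A * dist x y) := by
      intro k x
      refine ⟨-R, ?_⟩
      rintro a ⟨y, rfl⟩
      show -R ≤ u (N₀ + k) y + A * dist x y
      have h1 := (abs_le.mp (hubd k y)).1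
      have h2 : 0 ≤ A * dist x y := by positivity
      linarith
    have hvle : ∀ k (x : V), v k x ≤ u (N₀ + k) x := by
      intro k x
      have := ciInf_le (hbdd k x) x
      simpa using this
    have hlev : ∀ k (x : V), u (N₀ + k) x - Bc * ε (N₀ + k) ≤ v k x := by
      intro k x
      refine le_ciInf fun y => ?_
      have h1 := (abs_le.mp (hEst k x y)).2
      linarith
    have hvlip : ∀ k (x x' : V), v k x ≤ v k x' + A * dist x x' := by
      intro k x x'
      have h2 : v k x - A * dist x x' ≤ v k x' := by
        refine le_ciInf fun y => ?_
        have h3 : v k x ≤ u (N₀ + k) y + A * dist x y := ciInf_le (hbdd k x) y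
        have h4 : dist x y ≤ dist x x' + dist x' y := dist_triangle x x' y
        nlinarith
      linarith
    have hvlip' : ∀ k (x x' : V), |v k x - v k x'| ≤ A * dist x x' := by
      intro k x x'
      rw [abs_le]
      constructor
      · have := hvlip k x' x
        rw [dist_comm x' x] at this
        linarith
      · linarith [hvlip k x x']
    have hvbd : ∀ k (x : V), |v k x| ≤ R + Bc * D := by
      intro k x
      have h1 := hvle k x
      have h2 := hlev k x
      have h3 := abs_le.mp (hubd k x)
      have h4 : ε (N₀ + k) ≤ D := (hN₀ _ (Nat.le_add_right _ _)).le
      rw [abs_le]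
      constructor <;> nlinarith [hεpos (N₀ + k)]
    set R2 := R + Bc * D with hR2def
    have hvcont : ∀ k, Continuous (v k) := by
      intro k
      have : LipschitzWith (Real.toNNReal A) (v k) := by
        apply LipschitzWith.of_dist_le_mul
        intro x y
        rw [Real.dist_eq, Real.coe_toNNReal A hA0]
        exact hvlip' k x y
      exact this.continuous
    -- the compact set of Lipschitz functions
    set 𝒮 : Set C(V, ℝ) := {g | (∀ x y : V, dist (g x) (g y) ≤ A * dist x y) ∧
      ∀ x : V, g x ∈ Icc (-R2) R2} with h𝒮def
    have hcompact : IsCompact 𝒮 := by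
      apply ArzelaAscoli.isCompact_of_equicontinuous
      · -- image is compact in the product topology
        have himg : (ContinuousMap.toFun '' 𝒮) = {g : V → ℝ |
            (∀ x y : V, dist (g x) (g y) ≤ A * dist x y) ∧ ∀ x : V, g x ∈ Icc (-R2) R2} := by
          ext g
          constructor
          · rintro ⟨g', hg', rfl⟩
            exact hg'
          · rintro ⟨h1, h2⟩
            have hgc : Continuous g := by
              have : LipschitzWith (Real.toNNReal A) g := by
                apply LipschitzWith.of_dist_le_mul
                intro x y
                rw [Real.coe_toNNReal A hA0]
                exact h1 x y
              exact this.continuous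
            exact ⟨⟨g, hgc⟩, ⟨h1, h2⟩, rfl⟩
        rw [himg]
        apply IsCompact.of_isClosed_subset (isCompact_univ_pi fun _ : V => isCompact_Icc)
        · have e : {g : V → ℝ | (∀ x y : V, dist (g x) (g y) ≤ A * dist x y) ∧
              ∀ x : V, g x ∈ Icc (-R2) R2}
              = (⋂ (x : V), ⋂ (y : V), {g : V → ℝ | dist (g x) (g y) ≤ A * dist x y}) ∩
                ⋂ (x : V), {g : V → ℝ | g x ∈ Icc (-R2) R2} := by
            ext g
            simp [mem_iInter]
          rw [e]
          exact ((isClosed_iInter fun x => isClosed_iInter fun y =>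
              isClosed_le ((continuous_apply x).dist (continuous_apply y))
                continuous_const).inter
            (isClosed_iInter fun x => IsClosed.preimage (continuous_apply x) isClosed_Icc))
        · intro g hg
          rw [mem_univ_pi]
          exact fun x => hg.2 x
      · -- equicontinuity
        apply Metric.equicontinuous_of_continuity_modulus (fun t => A * t)
        · have : Tendsto (fun t : ℝ => A * t) (𝓝 0) (𝓝 (A * 0)) :=
            (continuous_const.mul continuous_id).tendsto 0
          simpa using this
        · rintro x y ⟨g, hg⟩
          exact hg.1 x y
    -- sequential compactness
    set gk : ℕ → C(V, ℝ) := fun k => ⟨v k, hvcont k⟩ with hgkdef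
    have hgkmem : ∀ k, gk k ∈ 𝒮 := by
      intro k
      constructor
      · intro x y
        rw [Real.dist_eq]
        exact hvlip' k x y
      · intro x
        exact mem_Icc.mpr (abs_le.mp (hvbd k x))
    obtain ⟨w', hw'mem, φ, hφmono, hφconv⟩ := hcompact.isSeqCompact hgkmem
    have hunif : TendstoUniformly (fun k => (gk (φ k) : V → ℝ)) (w' : V → ℝ) atTop :=
      ContinuousMap.tendsto_iff_tendstoUniformly.mp hφconv
    -- convergence of the original sequence
    have hεφ : Tendsto (fun k => ε (N₀ + φ k)) atTop (𝓝 0) := by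
      apply hεlim.comp
      apply tendsto_atTop_mono (fun k => le_trans (hφmono.id_le k) (Nat.le_add_left _ _))
      exact tendsto_id
    refine ⟨fun k => N₀ + φ k, (w' : V → ℝ), A, ?_, ?_, ?_, ?_⟩
    · intro a b hab
      exact Nat.add_lt_add_left (hφmono hab) N₀
    · rw [Metric.tendstoUniformly_iff]
      intro η hη
      have h1 := Metric.tendstoUniformly_iff.mp hunif (η / 2) (by linarith)
      have h2 : ∀ᶠ k in atTop, (Bc + 1) * ε (N₀ + φ k) < η / 2 := by
        have h3 : Tendsto (fun k => (Bc + 1) * ε (N₀ + φ k)) atTop (𝓝 ((Bc + 1) * 0)) :=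
          hεφ.const_mul (Bc + 1)
        rw [mul_zero] at h3
        exact h3.eventually_lt_const (by linarith)
      filter_upwards [h1, h2] with k hk1 hk2 x
      have h4 : dist ((w' : V → ℝ) x) (u (N₀ + φ k) x)
          ≤ dist ((w' : V → ℝ) x) (v (φ k) x) + dist (v (φ k) x) (u (N₀ + φ k) x) :=
        dist_triangle _ _ _
      have h5 : dist (v (φ k) x) (u (N₀ + φ k) x) ≤ Bc * ε (N₀ + φ k) := by
        rw [Real.dist_eq, abs_le]
        have := hvle (φ k) x
        have := hlev (φ k) x
        constructor <;> nlinarith [hεpos (N₀ + φ k), hBc0]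
      have h6 := hk1 x
      have h7 : Bc * ε (N₀ + φ k) ≤ (Bc + 1) * ε (N₀ + φ k) := by
        nlinarith [hεpos (N₀ + φ k)]
      calc dist ((w' : V → ℝ) x) (u (N₀ + φ k) x)
          ≤ dist ((w' : V → ℝ) x) (v (φ k) x) + dist (v (φ k) x) (u (N₀ + φ k) x) := h4
      _ < η / 2 + Bc * ε (N₀ + φ k) := by
          have : dist ((w' : V → ℝ) x) (v (φ k) x) < η / 2 := h6
          linarith [h5, this]
      _ ≤ η / 2 + (Bc + 1) * ε (N₀ + φ k) := by linarith
      _ < η := by linarith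
    · intro x y
      have := hw'mem.1 x y
      rw [Real.dist_eq] at this
      exact this
    · rw [hAdef]
end

section
/- Let G=(V,E) be either the ε-adjacency graph of a compact length space, or a finite connected graph with a loop at each vertex; let f, u₀ be functions on V (continuous if G is an adjacency graph), and assume c_f = 0. Then the game values (u_n) with terminal payoff u₀ and running payoff f satisfy lim_{n→∞} sup_{x∈V} |u_{n+1}(x) − u_n(x)| = 0. -/
open Set Filter Topology
open scoped ENNReal Classical

section Aux

variable {V : Type*} {adj : V → V → Prop}

private lemma gameVal_succ_apply (adj : V → V → Prop) (f u₀ : V → ℝ) (n : ℕ) (x : V) :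
    gameVal adj f u₀ (n + 1) x =
      (sSup (gameVal adj f u₀ n '' {y | adj x y}) +
        sInf (gameVal adj f u₀ n '' {y | adj x y})) / 2 + f x := rfl

/-- Comparison of suprema over a ball. -/
private lemma csSup_image_le_add (hrefl : ∀ x, adj x x) {g h : V → ℝ} {c K : ℝ}
    (hhb : ∀ y, |h y| ≤ c) (x : V) (hK : ∀ y, adj x y → g y ≤ h y + K) :
    sSup (g '' {y | adj x y}) ≤ sSup (h '' {y | adj x y}) + K := by
  refine csSup_le ⟨g x, x, hrefl x, rfl⟩ ?_
  rintro a ⟨y, hy, rfl⟩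
  have h1 : h y ≤ sSup (h '' {y | adj x y}) :=
    le_csSup ⟨c, by rintro b ⟨z, -, rfl⟩; exact (abs_le.1 (hhb z)).2⟩ ⟨y, hy, rfl⟩
  have := hK y hy; linarith

/-- Comparison of infima over a ball. -/
private lemma csInf_image_le_add (hrefl : ∀ x, adj x x) {g h : V → ℝ} {c K : ℝ}
    (hgb : ∀ y, |g y| ≤ c) (x : V) (hK : ∀ y, adj x y → g y ≤ h y + K) :
    sInf (g '' {y | adj x y}) ≤ sInf (h '' {y | adj x y}) + K := by
  refine le_of_forall_pos_le_add fun θ hθ => ?_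
  obtain ⟨a, ⟨y, hy, rfl⟩, hlt⟩ :=
    exists_lt_of_csInf_lt (⟨h x, x, hrefl x, rfl⟩ : (h '' {y | adj x y}).Nonempty)
      (lt_add_of_pos_right _ hθ)
  have h1 : sInf (g '' {y | adj x y}) ≤ g y :=
    csInf_le ⟨-c, by rintro b ⟨z, -, rfl⟩; exact (abs_le.1 (hgb z)).1⟩ ⟨y, hy, rfl⟩
  have := hK y hy; linarith

/-- Per-level boundedness of game values. -/
private lemma gameVal_bound (hrefl : ∀ x, adj x x) {f u₀ : V → ℝ} {F B : ℝ}
    (hF : ∀ x, |f x| ≤ F) (hB : ∀ x, |u₀ x| ≤ B) :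
    ∀ n x, |gameVal adj f u₀ n x| ≤ B + n * F := by
  intro n
  induction n with
  | zero => intro x; simpa [gameVal] using hB x
  | succ n ih =>
    intro x
    have hne : (gameVal adj f u₀ n '' {y | adj x y}).Nonempty := ⟨_, x, hrefl x, rfl⟩
    have hba : BddAbove (gameVal adj f u₀ n '' {y | adj x y}) :=
      ⟨B + n * F, by rintro a ⟨y, -, rfl⟩; exact (abs_le.1 (ih y)).2⟩
    have hbb : BddBelow (gameVal adj f u₀ n '' {y | adj x y}) :=
      ⟨-(B + n * F), by rintro a ⟨y, -, rfl⟩; exact (abs_le.1 (ih y)).1⟩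
    have h1 : sSup (gameVal adj f u₀ n '' {y | adj x y}) ≤ B + n * F :=
      csSup_le hne (by rintro a ⟨y, -, rfl⟩; exact (abs_le.1 (ih y)).2)
    have h2 : -(B + n * F) ≤ sSup (gameVal adj f u₀ n '' {y | adj x y}) :=
      le_trans (abs_le.1 (ih x)).1 (le_csSup hba ⟨x, hrefl x, rfl⟩)
    have h3 : -(B + n * F) ≤ sInf (gameVal adj f u₀ n '' {y | adj x y}) :=
      le_csInf hne (by rintro a ⟨y, -, rfl⟩; exact (abs_le.1 (ih y)).1)
    have h4 : sInf (gameVal adj f u₀ n '' {y | adj x y}) ≤ B + n * F :=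
      le_trans (csInf_le hbb ⟨x, hrefl x, rfl⟩) (abs_le.1 (ih x)).2
    have h5 := abs_le.1 (hF x)
    rw [gameVal_succ_apply, abs_le]
    push_cast
    constructor <;> linarith

/-- Game values with bounded terminal payoffs stay uniformly close. -/
private lemma gameVal_comparison (hrefl : ∀ x, adj x x) {f u₀ v₀ : V → ℝ} {F B B' K : ℝ}
    (hF : ∀ x, |f x| ≤ F) (hB : ∀ x, |u₀ x| ≤ B) (hB' : ∀ x, |v₀ x| ≤ B')
    (hK : ∀ x, |u₀ x - v₀ x| ≤ K) :
    ∀ n x, |gameVal adj f u₀ n x - gameVal adj f v₀ n x| ≤ K := by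
  intro n
  induction n with
  | zero => exact hK
  | succ n ih =>
    intro x
    have hub := gameVal_bound hrefl hF hB n
    have hvb := gameVal_bound hrefl hF hB' n
    have h1 : sSup (gameVal adj f u₀ n '' {y | adj x y}) ≤
        sSup (gameVal adj f v₀ n '' {y | adj x y}) + K :=
      csSup_image_le_add hrefl hvb x (fun y _ => by have := abs_le.1 (ih y); linarith)
    have h2 : sSup (gameVal adj f v₀ n '' {y | adj x y}) ≤
        sSup (gameVal adj f u₀ n '' {y | adj x y}) + K :=
      csSup_image_le_add hrefl hub x (fun y _ => by have := abs_le.1 (ih y); linarith)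
    have h3 : sInf (gameVal adj f u₀ n '' {y | adj x y}) ≤
        sInf (gameVal adj f v₀ n '' {y | adj x y}) + K :=
      csInf_image_le_add hrefl hub x (fun y _ => by have := abs_le.1 (ih y); linarith)
    have h4 : sInf (gameVal adj f v₀ n '' {y | adj x y}) ≤
        sInf (gameVal adj f u₀ n '' {y | adj x y}) + K :=
      csInf_image_le_add hrefl hvb x (fun y _ => by have := abs_le.1 (ih y); linarith)
    rw [gameVal_succ_apply, gameVal_succ_apply, abs_le]
    constructor <;> linarith

/-- Negating the payoffs negates the game values. -/
private lemma gameVal_neg (adj : V → V → Prop) (f u₀ : V → ℝ) :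
    ∀ n x, gameVal adj (fun x => -f x) (fun x => -u₀ x) n x = -gameVal adj f u₀ n x := by
  intro n
  induction n with
  | zero => intro x; rfl
  | succ n ih =>
    intro x
    have himg : (gameVal adj (fun x => -f x) (fun x => -u₀ x) n '' {y | adj x y})
        = -(gameVal adj f u₀ n '' {y | adj x y}) := by
      ext a
      simp only [Set.mem_neg, Set.mem_image]
      constructor
      · rintro ⟨y, hy, rfl⟩
        exact ⟨y, hy, by rw [ih y, neg_neg]⟩
      · rintro ⟨y, hy, hyy⟩
        exact ⟨y, hy, by rw [ih y, hyy, neg_neg]⟩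
    have hS : sSup (-(gameVal adj f u₀ n '' {y | adj x y}))
        = -sInf (gameVal adj f u₀ n '' {y | adj x y}) := by
      rw [Real.sInf_def, neg_neg]
    have hI : sInf (-(gameVal adj f u₀ n '' {y | adj x y}))
        = -sSup (gameVal adj f u₀ n '' {y | adj x y}) := by
      rw [Real.sInf_def, neg_neg]
    rw [gameVal_succ_apply, gameVal_succ_apply, himg, hS, hI]
    ring

/-- Uniform (in `n`) boundedness of game values when the long-term advantage is `0`. -/
private lemma gameVal_uniform_bound [Nonempty V] (hrefl : ∀ x, adj x x) {f u₀ : V → ℝ}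
    {F B : ℝ} (hF : ∀ x, |f x| ≤ F) (hB : ∀ x, |u₀ x| ≤ B) (hlta : IsLTA adj f 0) :
    ∃ C : ℝ, ∀ n x, |gameVal adj f u₀ n x| ≤ C := by
  obtain ⟨C₀, hC₀⟩ := hlta
  have h0 : ∀ x : V, |(fun _ => (0:ℝ)) x| ≤ (0:ℝ) := fun x => by simp
  have hcmp : ∀ n x, |gameVal adj f u₀ n x - gameVal adj f (fun _ => (0:ℝ)) n x| ≤ |B| :=
    gameVal_comparison hrefl hF hB h0
      (fun x => by simpa using le_trans (hB x) (le_abs_self B))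
  refine ⟨|C₀| + |B|, fun n x => ?_⟩
  have h1 := hC₀ n x
  simp only [mul_zero, sub_zero] at h1
  have h1' : |gameVal adj f (fun _ => (0:ℝ)) n x| ≤ |C₀| := le_trans h1 (le_abs_self C₀)
  have h2 := abs_le.1 (hcmp n x)
  have h3 := abs_le.1 h1'
  rw [abs_le]
  constructor <;> linarith

/-- Core lemma: with uniformly bounded game values, on a graph with a loop at each
vertex, the successive differences are eventually below any positive threshold. -/
private lemma core [Nonempty V] (hrefl : ∀ x, adj x x) (f u₀ : V → ℝ) (C : ℝ)
    (hC : ∀ n x, |gameVal adj f u₀ n x| ≤ C) :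
    ∀ ε : ℝ, 0 < ε → ∃ N : ℕ, ∀ n ≥ N, ∀ x : V,
      gameVal adj f u₀ (n + 1) x - gameVal adj f u₀ n x < ε := by
  set u : ℕ → V → ℝ := gameVal adj f u₀ with hu
  set d : ℕ → V → ℝ := fun n x => u (n + 1) x - u n x with hdd
  set S : ℕ → V → ℝ := fun n x => sSup (u n '' {y | adj x y}) with hSdef
  set III : ℕ → V → ℝ := fun n x => sInf (u n '' {y | adj x y}) with hIdef
  have hdb : ∀ n x, |d n x| ≤ 2 * C := by
    intro n x
    have h1 := abs_le.1 (hC (n + 1) x)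
    have h2 := abs_le.1 (hC n x)
    simp only [hdd]
    rw [abs_le]
    constructor <;> linarith
  have hbddd : ∀ n, BddAbove (Set.range (d n)) :=
    fun n => ⟨2 * C, by rintro a ⟨x, rfl⟩; exact (abs_le.1 (hdb n x)).2⟩
  set δ : ℕ → ℝ := fun n => ⨆ x, d n x with hδdef
  have hdle : ∀ n x, d n x ≤ δ n := fun n x => le_ciSup (hbddd n) x
  have hδlb : ∀ n, -(2 * C) ≤ δ n :=
    fun n => le_trans (abs_le.1 (hdb n (Classical.arbitrary V))).1 (hdle n _)
  have hsucc : ∀ n x, u (n + 1) x = (S n x + III n x) / 2 + f x := by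
    intro n x
    simp only [hu, hSdef, hIdef]
    exact gameVal_succ_apply adj f u₀ n x
  have hd_eq : ∀ n x, d (n + 1) x
      = ((S (n + 1) x - S n x) + (III (n + 1) x - III n x)) / 2 := by
    intro n x
    simp only [hdd]
    rw [hsucc (n + 1) x, hsucc n x]
    ring
  have hSle : ∀ n x, S (n + 1) x ≤ S n x + δ n := by
    intro n x
    simp only [hSdef, hu]
    exact csSup_image_le_add hrefl (hC n) x
      (fun y _ => by have := hdle n y; simp only [hdd, hu] at this; linarith)
  have hIle : ∀ n x, III (n + 1) x ≤ III n x + δ n := by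
    intro n x
    simp only [hIdef, hu]
    exact csInf_image_le_add hrefl (hC (n + 1)) x
      (fun y _ => by have := hdle n y; simp only [hdd, hu] at this; linarith)
  have hdmono : ∀ n, δ (n + 1) ≤ δ n := by
    intro n
    simp only [hδdef]
    refine ciSup_le fun x => ?_
    rw [hd_eq n x]
    have := hSle n x
    have := hIle n x
    linarith
  have hanti : Antitone δ := antitone_nat_of_succ_le hdmono
  have hbddδ : BddBelow (Set.range δ) := ⟨-(2 * C), by rintro a ⟨n, rfl⟩; exact hδlb n⟩
  set L : ℝ := ⨅ n, δ n with hLdef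
  have hLle : ∀ n, L ≤ δ n := fun n => ciInf_le hbddδ n
  have hL0 : L ≤ 0 := by
    by_contra h
    push_neg at h
    obtain ⟨k, hk⟩ := exists_nat_gt ((2 * C + 1) / L)
    have hkL : 2 * C + 1 < k * L := by
      rw [div_lt_iff₀ h] at hk; linarith
    set η : ℝ := 1 / 2 ^ (k + 3) with hηdef
    have hη : 0 < η := by positivity
    obtain ⟨N, hN⟩ := exists_lt_of_ciInf_lt
      (show ⨅ n, δ n < L + η from lt_add_of_pos_right _ hη)
    have hwin : ∀ m, N ≤ m → δ m ≤ L + η := fun m hm => le_trans (hanti hm) hN.le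
    set M := N + k + 1 with hM
    -- the ball nonemptiness and bounds
    have hne : ∀ n x, (u n '' {y | adj x y}).Nonempty := fun n x => ⟨_, x, hrefl x, rfl⟩
    have hbb : ∀ n x, BddBelow (u n '' {y | adj x y}) :=
      fun n x => ⟨-C, by rintro a ⟨y, -, rfl⟩; exact (abs_le.1 (hC n y)).1⟩
    -- one backward step
    have step : ∀ m, N ≤ m → ∀ x e, 0 ≤ e → L - e ≤ d (m + 1) x →
        ∃ y, u m y ≤ u (m + 1) x - L + 2 * e + 2 * η ∧ L - (2 * e + 2 * η) ≤ d m y := by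
      intro m hm x e he hx
      have hA : S (m + 1) x ≤ S m x + δ m := hSle m x
      have hδm : δ m ≤ L + η := hwin m hm
      have hB : L - 2 * e - η ≤ III (m + 1) x - III m x := by
        rw [hd_eq m x] at hx; linarith
      obtain ⟨a, ⟨y, hy, rfl⟩, hlt⟩ := exists_lt_of_csInf_lt (hne m x)
        (lt_add_of_pos_right (sInf (u m '' {y | adj x y})) hη)
      have hlt' : u m y < III m x + η := hlt
      have h1 : III (m + 1) x ≤ u (m + 1) y :=
        csInf_le (hbb (m + 1) x) ⟨y, hy, rfl⟩
      have h3 : III (m + 1) x ≤ u (m + 1) x :=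
        csInf_le (hbb (m + 1) x) ⟨x, hrefl x, rfl⟩
      refine ⟨y, by linarith, ?_⟩
      have hdy : d m y = u (m + 1) y - u m y := rfl
      rw [hdy]
      linarith
    -- backward induction producing a long decreasing chain of values
    have main : ∀ j, j ≤ k → ∃ z, L - (2 ^ (j + 2) - 3) * η ≤ d (M - j) z ∧
        u (M - j) z ≤ C - j * L + 2 ^ (j + 3) * η := by
      intro j
      induction j with
      | zero =>
        intro _
        have h1 : δ M - η < ⨆ x, d M x := by
          have : (⨆ x, d M x) = δ M := rfl
          rw [this]; linarith
        obtain ⟨z, hz⟩ := exists_lt_of_lt_ciSup h1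
        refine ⟨z, ?_, ?_⟩
        · have hLM := hLle M
          simp only [Nat.sub_zero]
          norm_num
          linarith
        · have h2 := (abs_le.1 (hC M z)).2
          have h2' : u M z ≤ C := h2
          simp only [Nat.sub_zero]
          push_cast
          nlinarith [hη.le]
      | succ j ih =>
        intro hj
        obtain ⟨z, hz1, hz2⟩ := ih (Nat.le_of_succ_le hj)
        have hmN : N ≤ M - (j + 1) := by omega
        have hidx : M - j = (M - (j + 1)) + 1 := by omega
        rw [hidx] at hz1 hz2
        have h32 : (3:ℝ) ≤ 2 ^ (j + 2) := by
          calc (3:ℝ) ≤ 4 := by norm_num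
          _ = 2 ^ 2 := by norm_num
          _ ≤ 2 ^ (j + 2) := by
            apply pow_le_pow_right₀ (by norm_num) (by omega)
        have he : (0:ℝ) ≤ (2 ^ (j + 2) - 3) * η := by nlinarith [hη.le]
        obtain ⟨y, hy1, hy2⟩ := step (M - (j + 1)) hmN z _ he hz1
        refine ⟨y, ?_, ?_⟩
        · have harith : 2 * ((2 ^ (j + 2) - 3) * η) + 2 * η ≤ (2 ^ (j + 1 + 2) - 3) * η := by
            have hp : (2:ℝ) ^ (j + 1 + 2) = 2 * 2 ^ (j + 2) := by ring
            nlinarith [hη.le]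
          linarith
        · have hp : (2:ℝ) ^ (j + 1 + 3) = 2 * 2 ^ (j + 3) := by ring
          have hp2 : (2:ℝ) ^ (j + 3) = 2 * 2 ^ (j + 2) := by ring
          push_cast
          push_cast at hz2
          rw [hp, hp2] at *
          ring_nf
          ring_nf at hy1 hz2
          linarith [hη.le, pow_nonneg (by norm_num : (0:ℝ) ≤ 1/2) k]
    obtain ⟨z, -, hz2⟩ := main k le_rfl
    have h1 : -C ≤ u (M - k) z := (abs_le.1 (hC (M - k) z)).1
    have h2 : (2:ℝ) ^ (k + 3) * η = 1 := by
      rw [hηdef]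
      field_simp
    rw [h2] at hz2
    linarith
  -- conclude
  intro ε hε
  have hlt : (⨅ n, δ n) < ε := lt_of_le_of_lt hL0 hε
  obtain ⟨N, hN⟩ := exists_lt_of_ciInf_lt hlt
  refine ⟨N, fun n hn x => ?_⟩
  have h1 := hdle n x
  simp only [hdd, hu] at h1
  exact lt_of_le_of_lt h1 (lt_of_le_of_lt (hanti hn) hN)

/-- Abstract form of the theorem: graph with a loop at each vertex, bounded payoffs. -/
private theorem abstract_main [Nonempty V] (hrefl : ∀ x, adj x x) (f u₀ : V → ℝ) {F B : ℝ}
    (hF : ∀ x, |f x| ≤ F) (hB : ∀ x, |u₀ x| ≤ B) (hlta : IsLTA adj f 0) :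
    Tendsto (fun n => ⨆ x : V, |gameVal adj f u₀ (n + 1) x - gameVal adj f u₀ n x|)
      atTop (𝓝 0) := by
  obtain ⟨C, hC⟩ := gameVal_uniform_bound hrefl hF hB hlta
  have hC' : ∀ n x, |gameVal adj (fun x => -f x) (fun x => -u₀ x) n x| ≤ C := by
    intro n x
    rw [gameVal_neg, abs_neg]
    exact hC n x
  have h1 := core hrefl f u₀ C hC
  have h2 := core hrefl (fun x => -f x) (fun x => -u₀ x) C hC'
  rw [Metric.tendsto_atTop]
  intro ε hε
  obtain ⟨N₁, hN₁⟩ := h1 (ε / 2) (by positivity)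
  obtain ⟨N₂, hN₂⟩ := h2 (ε / 2) (by positivity)
  refine ⟨max N₁ N₂, fun n hn => ?_⟩
  have habs : ∀ x, |gameVal adj f u₀ (n + 1) x - gameVal adj f u₀ n x| ≤ ε / 2 := by
    intro x
    have ha := hN₁ n (le_trans (le_max_left _ _) hn) x
    have hb := hN₂ n (le_trans (le_max_right _ _) hn) x
    rw [gameVal_neg, gameVal_neg] at hb
    rw [abs_le]
    constructor <;> linarith
  have hsup : (⨆ x : V, |gameVal adj f u₀ (n + 1) x - gameVal adj f u₀ n x|) ≤ ε / 2 :=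
    ciSup_le habs
  have hsup0 : 0 ≤ ⨆ x : V, |gameVal adj f u₀ (n + 1) x - gameVal adj f u₀ n x| :=
    le_trans (abs_nonneg _)
      (le_ciSup ⟨ε / 2, by rintro a ⟨x, rfl⟩; exact habs x⟩ (Classical.arbitrary V))
  rw [Real.dist_eq, sub_zero, abs_of_nonneg hsup0]
  linarith

end Aux

/-- On the `ε`-adjacency graph of a compact length space (with
continuous payoffs), or on a finite connected graph with a loop at each vertex, if
`c_f = 0` then `sup_x |u_{n+1}(x) − u_n(x)| → 0`. -/
theorem game_values_successive_differences_vanish :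
    (∀ (V : Type) [MetricSpace V] [CompactSpace V] [Nonempty V], IsLengthSpace V →
      ∀ ε : ℝ, 0 < ε → ∀ f u₀ : V → ℝ, Continuous f → Continuous u₀ →
        IsLTA (fun x y => dist x y ≤ ε) f 0 →
        Tendsto (fun n => ⨆ x : V, |gameVal (fun a b => dist a b ≤ ε) f u₀ (n + 1) x -
            gameVal (fun a b => dist a b ≤ ε) f u₀ n x|) atTop (𝓝 0)) ∧
    (∀ (V : Type) [Fintype V] (adj : V → V → Prop), Symmetric adj → (∀ x, adj x x) →
      (∀ x y : V, ∃ n : ℕ, ReachesIn adj n x y) → ∀ f u₀ : V → ℝ,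
        IsLTA adj f 0 →
        Tendsto (fun n => ⨆ x : V, |gameVal adj f u₀ (n + 1) x - gameVal adj f u₀ n x|)
          atTop (𝓝 0)) := by
  constructor
  · intro V _ _ _ _hlen ε hε f u₀ hf hu hlta
    obtain ⟨F, hF⟩ := isCompact_univ.exists_bound_of_continuousOn hf.continuousOn
    obtain ⟨B, hB⟩ := isCompact_univ.exists_bound_of_continuousOn hu.continuousOn
    have hrefl : ∀ x : V, dist x x ≤ ε := fun x => by rw [dist_self]; exact hε.le
    exact abstract_main hrefl f u₀
      (fun x => by simpa [Real.norm_eq_abs] using hF x (mem_univ x))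
      (fun x => by simpa [Real.norm_eq_abs] using hB x (mem_univ x)) hlta
  · intro V _ adj _hsym hrefl _hconn f u₀ hlta
    rcases isEmpty_or_nonempty V with hV | hV
    · have hz : ∀ n : ℕ,
          (⨆ x : V, |gameVal adj f u₀ (n + 1) x - gameVal adj f u₀ n x|) = 0 :=
        fun n => Real.iSup_of_isEmpty _
      simp only [hz]
      exact tendsto_const_nhds
    · obtain ⟨F, hF⟩ := Finite.exists_le (fun x : V => |f x|)
      obtain ⟨B, hB⟩ := Finite.exists_le (fun x : V => |u₀ x|)
      exact abstract_main hrefl f u₀ hF hB hlta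
end

section
/- Let G=(V,E) be a finite connected graph with a loop at each vertex, f, u₀ : V → ℝ functions with c_f = 0, and let (u_n) be the game values with terminal payoff u₀ and running payoff f, with limit u = lim_n u_n. Assume that for each vertex x ∈ V there are unique neighbors y_m and y_M of x such that u(y_m) = min_{y∼x} u(y) and u(y_M) = max_{y∼x} u(y). Then there exist constants C > 0 and 0 < α < 1 (depending on G, f and u₀) such that ‖u_n − u‖ ≤ C·α^n for all n, where ‖·‖ is the supremum norm. -/
open Set Filter Topology
open scoped ENNReal Classical

open Filter Topology
set_option maxHeartbeats 1000000
set_option synthInstance.maxHeartbeats 200000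

section orbit
variable {W : Type*} [NormedAddCommGroup W] [NormedSpace ℝ W] [FiniteDimensional ℝ W]

lemma orbit_exp_decay (T : W →ₗ[ℝ] W) (hT : ∀ v, ‖T v‖ ≤ ‖v‖) (E : W)
    (h0 : Tendsto (fun k => (T ^ k) E) atTop (𝓝 0)) :
    ∃ C : ℝ, 0 < C ∧ ∃ α : ℝ, 0 < α ∧ α < 1 ∧ ∀ n : ℕ, ‖(T ^ n) E‖ ≤ C * α ^ n := by
  have happ : ∀ (j k : ℕ) (v : W), (T ^ (j + k)) v = (T ^ j) ((T ^ k) v) := by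
    intro j k v; rw [pow_add, Module.End.mul_apply]
  have hTpow : ∀ (j : ℕ) (v : W), ‖(T ^ j) v‖ ≤ ‖v‖ := by
    intro j
    induction j with
    | zero => intro v; simp
    | succ j ih =>
      intro v
      have h1 : j + 1 = j + 1 := rfl
      rw [show j + 1 = j + 1 from rfl, happ j 1 v, pow_one]
      exact (ih (T v)).trans (hT v)
  set S : Submodule ℝ W := Submodule.span ℝ (Set.range fun k => (T ^ k) E) with hS
  have hinv : ∀ v ∈ S, T v ∈ S := by
    intro v hv
    induction hv using Submodule.span_induction with
    | mem x hx =>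
      obtain ⟨k, rfl⟩ := hx
      apply Submodule.subset_span
      exact ⟨k + 1, by show (T ^ (k+1)) E = _; rw [add_comm k 1, happ 1 k, pow_one]⟩
    | zero => simp
    | add x y hx hy ihx ihy => rw [map_add]; exact S.add_mem ihx ihy
    | smul a x hx ihx => rw [map_smul]; exact S.smul_mem a ihx
  have htend : ∀ v ∈ S, Tendsto (fun k => (T ^ k) v) atTop (𝓝 0) := by
    intro v hv
    induction hv using Submodule.span_induction with
    | mem x hx =>
      obtain ⟨j, rfl⟩ := hx
      have heq : (fun k => (T ^ k) ((T ^ j) E)) = (fun k => (T ^ k) E) ∘ (fun k => k + j) := by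
        funext k; exact (happ k j E).symm
      rw [heq]
      exact h0.comp (tendsto_add_atTop_nat j)
    | zero =>
      have : (fun k : ℕ => (T ^ k) (0 : W)) = fun _ => (0 : W) := by
        funext k; exact map_zero _
      rw [this]; exact tendsto_const_nhds
    | add x y hx hy ihx ihy =>
      have : (fun k => (T ^ k) (x + y)) = fun k => (T ^ k) x + (T ^ k) y := by
        funext k; exact map_add _ _ _
      rw [this]; simpa using ihx.add ihy
    | smul a x hx ihx =>
      have : (fun k => (T ^ k) (a • x)) = fun k => a • (T ^ k) x := by
        funext k; exact map_smul _ _ _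
      rw [this]; simpa using ihx.const_smul a
  -- basis of S and coordinate bounds
  have hES : E ∈ S := Submodule.subset_span ⟨0, by simp⟩
  haveI : FiniteDimensional ℝ S := inferInstance
  set d := Module.finrank ℝ S with hd
  let b : Module.Basis (Fin d) ℝ S := Module.finBasis ℝ S
  let Kc : Fin d → ℝ := fun i => ‖LinearMap.toContinuousLinearMap (b.coord i)‖
  set K : ℝ := ∑ i, Kc i with hK
  have hKc : ∀ (i : Fin d) (v : S), |b.repr v i| ≤ Kc i * ‖v‖ := by
    intro i v
    have := (LinearMap.toContinuousLinearMap (b.coord i)).le_opNorm v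
    simpa [Real.norm_eq_abs, Module.Basis.coord_apply] using this
  have hK0 : 0 ≤ K := Finset.sum_nonneg fun i _ => by simp only [Kc]; exact norm_nonneg (LinearMap.toContinuousLinearMap (b.coord i))
  have hnormcoe : ∀ v : S, ‖(v : W)‖ = ‖v‖ := fun v => rfl
  have hbound : ∀ (m : ℕ) (v : S), ‖(T ^ m) (v : W)‖ ≤ ∑ i, |b.repr v i| * ‖(T ^ m) ((b i : W))‖ := by
    intro m v
    have hv : (v : W) = ∑ i, b.repr v i • ((b i : W)) := by
      have := b.sum_repr v
      calc (v : W) = ((∑ i, b.repr v i • b i : S) : W) := by rw [this]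
        _ = ∑ i, b.repr v i • ((b i : W)) := by push_cast; rfl
    rw [hv, map_sum]
    refine (norm_sum_le _ _).trans ?_
    apply Finset.sum_le_sum
    intro i _
    rw [map_smul, norm_smul, Real.norm_eq_abs]
  -- choose k with contraction by 1/2 on S
  set ε : ℝ := (2 * (K + 1))⁻¹ with hε
  have hεpos : 0 < ε := by positivity
  have hev : ∀ᶠ k in atTop, ∀ i : Fin d, ‖(T ^ k) ((b i : W))‖ ≤ ε := by
    rw [eventually_all]
    intro i
    have hbi : ((b i : W)) ∈ S := (b i).2
    have := (htend _ hbi).norm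
    simp only [norm_zero] at this
    exact this.eventually_le_const hεpos
  obtain ⟨k₀, hk₀⟩ := hev.exists_forall_of_atTop
  set k : ℕ := max k₀ 1 with hkdef
  have hk1 : 1 ≤ k := le_max_right _ _
  have hkpos : (0:ℝ) < k := by exact_mod_cast lt_of_lt_of_le one_pos hk1
  have hksmall : ∀ i : Fin d, ‖(T ^ k) ((b i : W))‖ ≤ ε := hk₀ k (le_max_left _ _)
  have hhalf : ∀ v : S, ‖(T ^ k) (v : W)‖ ≤ (1/2) * ‖(v : W)‖ := by
    intro v
    refine (hbound k v).trans ?_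
    have : ∑ i, |b.repr v i| * ‖(T ^ k) ((b i : W))‖ ≤ ∑ i, (Kc i * ‖v‖) * ε := by
      apply Finset.sum_le_sum
      intro i _
      exact mul_le_mul (hKc i v) (hksmall i) (norm_nonneg _) (by positivity)
    refine this.trans ?_
    rw [← Finset.sum_mul, ← Finset.sum_mul, ← hK]
    rw [hnormcoe]
    have : K * ‖v‖ * ε = (K * ε) * ‖v‖ := by ring
    rw [this]
    apply mul_le_mul_of_nonneg_right _ (norm_nonneg _)
    rw [hε]
    rw [mul_inv_le_iff₀ (by positivity)]
    nlinarith
  -- invariance of S under powers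
  have hinvk : ∀ (j : ℕ) (v : W), v ∈ S → (T ^ j) v ∈ S := by
    intro j
    induction j with
    | zero => intro v hv; simpa using hv
    | succ j ih =>
      intro v hv
      rw [add_comm j 1, happ 1 j, pow_one]
      exact hinv _ (ih v hv)
  -- geometric decay along multiples of k
  have hmexp : ∀ m : ℕ, ‖(T ^ (k * m)) E‖ ≤ (1/2 : ℝ) ^ m * ‖E‖ := by
    intro m
    induction m with
    | zero => simp
    | succ m ih =>
      have heq : (T ^ (k * (m+1))) E = (T ^ k) ((T ^ (k * m)) E) := by
        rw [← happ k (k*m)]; ring_nf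
      rw [heq]
      have hmem : (T ^ (k * m)) E ∈ S := hinvk _ _ hES
      calc ‖(T ^ k) ((T ^ (k * m)) E)‖
          = ‖(T ^ k) (((⟨(T ^ (k*m)) E, hmem⟩ : S) : W))‖ := rfl
        _ ≤ (1/2) * ‖(T ^ (k*m)) E‖ := hhalf ⟨_, hmem⟩
        _ ≤ (1/2) * ((1/2)^m * ‖E‖) := by linarith
        _ = (1/2)^(m+1) * ‖E‖ := by ring
  have hn : ∀ n : ℕ, ‖(T ^ n) E‖ ≤ (1/2 : ℝ) ^ (n / k) * ‖E‖ := by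
    intro n
    have heq : (T ^ n) E = (T ^ (n % k)) ((T ^ (k * (n / k))) E) := by
      rw [← happ]
      congr 1
      rw [Nat.mod_add_div n k]
    rw [heq]
    exact (hTpow _ _).trans (hmexp _)
  -- the exponential rate
  set α : ℝ := (1/2 : ℝ) ^ ((k : ℝ)⁻¹) with hα
  have hα0 : 0 < α := Real.rpow_pos_of_pos (by norm_num) _
  have hα1 : α < 1 := Real.rpow_lt_one (by norm_num) (by norm_num) (by positivity)
  have hαn : ∀ n : ℕ, (1/2 : ℝ) ^ (n / k) ≤ 2 * α ^ n := by
    intro n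
    have hdge : (k : ℝ)⁻¹ * n - 1 ≤ ((n / k : ℕ) : ℝ) := by
      have hmeq : ((n % k : ℕ) : ℝ) + (k : ℝ) * ((n / k : ℕ) : ℝ) = (n : ℝ) := by
        exact_mod_cast Nat.mod_add_div n k
      have hmlt : ((n % k : ℕ) : ℝ) < k := by
        exact_mod_cast Nat.mod_lt n (lt_of_lt_of_le one_pos hk1)
      have hinv : (k : ℝ) * (k : ℝ)⁻¹ = 1 := mul_inv_cancel₀ (ne_of_gt hkpos)
      nlinarith [mul_le_mul_of_nonneg_right (le_of_lt hmlt) (le_of_lt (inv_pos.mpr hkpos))]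
    have h2 : (1/2 : ℝ) ^ (((n / k : ℕ) : ℝ)) ≤ (1/2 : ℝ) ^ ((k : ℝ)⁻¹ * n - 1) :=
      Real.rpow_le_rpow_of_exponent_ge (by norm_num) (by norm_num) hdge
    have h3 : (1/2 : ℝ) ^ ((k : ℝ)⁻¹ * n - 1) = 2 * α ^ n := by
      rw [Real.rpow_sub (by norm_num), Real.rpow_one]
      rw [Real.rpow_mul (by norm_num : (0:ℝ) ≤ 1/2), Real.rpow_natCast, hα]
      ring
    calc (1/2 : ℝ) ^ (n / k) = (1/2 : ℝ) ^ (((n / k : ℕ) : ℝ)) := (Real.rpow_natCast _ _).symm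
      _ ≤ (1/2 : ℝ) ^ ((k : ℝ)⁻¹ * n - 1) := h2
      _ = 2 * α ^ n := h3
  refine ⟨2 * ‖E‖ + 1, by positivity, α, hα0, hα1, fun n => ?_⟩
  calc ‖(T ^ n) E‖ ≤ (1/2 : ℝ) ^ (n / k) * ‖E‖ := hn n
    _ ≤ (2 * α ^ n) * ‖E‖ := mul_le_mul_of_nonneg_right (hαn n) (norm_nonneg _)
    _ = (2 * ‖E‖) * α ^ n := by ring
    _ ≤ (2 * ‖E‖ + 1) * α ^ n := by nlinarith [pow_pos hα0 n]
end orbit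
section auxsup
open Filter Topology

lemma tendsto_finset_sup'_aux {V : Type*} (s : Finset V) (hs : s.Nonempty)
    (g : ℕ → V → ℝ) (u : V → ℝ) :
    (∀ x ∈ s, Tendsto (fun n => g n x) atTop (𝓝 (u x))) →
    Tendsto (fun n => s.sup' hs (g n)) atTop (𝓝 (s.sup' hs u)) := by
  induction hs using Finset.Nonempty.cons_induction with
  | singleton a => intro h; simpa using h a (by simp)
  | cons a s ha hs ih =>
    intro h
    simp only [Finset.sup'_cons hs]
    exact (h a (by simp)).max (ih fun x hx => h x (by simp [hx]))

lemma tendsto_finset_inf'_aux {V : Type*} (s : Finset V) (hs : s.Nonempty)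
    (g : ℕ → V → ℝ) (u : V → ℝ) :
    (∀ x ∈ s, Tendsto (fun n => g n x) atTop (𝓝 (u x))) →
    Tendsto (fun n => s.inf' hs (g n)) atTop (𝓝 (s.inf' hs u)) := by
  induction hs using Finset.Nonempty.cons_induction with
  | singleton a => intro h; simpa using h a (by simp)
  | cons a s ha hs ih =>
    intro h
    simp only [Finset.inf'_cons hs]
    exact (h a (by simp)).min (ih fun x hx => h x (by simp [hx]))

/-- The averaging operator along the two selection maps. -/
noncomputable def halfOp {V : Type*} (yM ym : V → V) : (V → ℝ) →ₗ[ℝ] (V → ℝ) where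
  toFun v := fun x => (v (yM x) + v (ym x)) / 2
  map_add' v w := by funext x; simp only [Pi.add_apply]; ring
  map_smul' a v := by funext x; simp only [Pi.smul_apply, smul_eq_mul, RingHom.id_apply]; ring

end auxsup

/-- On a finite connected graph with a loop at each vertex, with
`c_f = 0` and limit `u` of the game values, if at each vertex the minimizing and
maximizing neighbors of `u` are unique, then the convergence `u_n → u` is exponentially
fast: `‖u_n − u‖ ≤ C·αⁿ` for some `C > 0` and `0 < α < 1`. -/
theorem game_values_exponential_convergence {V : Type*} [Fintype V]
    (adj : V → V → Prop) (hsymm : Symmetric adj) (hloops : ∀ x, adj x x)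
    (hconn : ∀ x y : V, ∃ n : ℕ, ReachesIn adj n x y)
    (f u₀ u : V → ℝ) (hc : IsLTA adj f 0)
    (hlim : ∀ x : V, Tendsto (fun n => gameVal adj f u₀ n x) atTop (𝓝 (u x)))
    (hmin : ∀ x : V, ∃! y : V, adj x y ∧ u y = sInf (u '' {z | adj x z}))
    (hmax : ∀ x : V, ∃! y : V, adj x y ∧ u y = sSup (u '' {z | adj x z})) :
    ∃ C : ℝ, 0 < C ∧ ∃ α : ℝ, 0 < α ∧ α < 1 ∧
      ∀ n : ℕ, (⨆ x : V, |gameVal adj f u₀ n x - u x|) ≤ C * α ^ n := by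
  classical
  rcases isEmpty_or_nonempty V with hV | hV
  · refine ⟨1, one_pos, 1/2, by norm_num, by norm_num, fun n => ?_⟩
    rw [Real.iSup_of_isEmpty]
    positivity
  set G : ℕ → V → ℝ := gameVal adj f u₀ with hGdef
  -- basic facts about neighbourhoods
  have hNne : ∀ x : V, ({y | adj x y}).Nonempty := fun x => ⟨x, hloops x⟩
  have hGsucc : ∀ n x, G (n+1) x =
      (sSup (G n '' {y | adj x y}) + sInf (G n '' {y | adj x y})) / 2 + f x := fun n x => rfl
  -- the fixed point equation for u
  have hfix : ∀ x, u x = (sSup (u '' {y | adj x y}) + sInf (u '' {y | adj x y})) / 2 + f x := by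
    intro x
    set s : Finset V := (Set.toFinite {y | adj x y}).toFinset with hsdef
    have hcoe : (s : Set V) = {y | adj x y} := Set.Finite.coe_toFinset _
    have hs : s.Nonempty := by
      rw [← Finset.coe_nonempty, hcoe]; exact hNne x
    have hsupeq : ∀ g : V → ℝ, sSup (g '' {y | adj x y}) = s.sup' hs g := by
      intro g; rw [Finset.sup'_eq_csSup_image, hcoe]
    have hinfeq : ∀ g : V → ℝ, sInf (g '' {y | adj x y}) = s.inf' hs g := by
      intro g; rw [Finset.inf'_eq_csInf_image, hcoe]
    have h1 : Tendsto (fun n => G (n+1) x) atTop (𝓝 (u x)) :=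
      (hlim x).comp (tendsto_add_atTop_nat 1)
    have hmemlim : ∀ z ∈ s, Tendsto (fun n => G n z) atTop (𝓝 (u z)) := fun z _ => hlim z
    have hsup : Tendsto (fun n => sSup (G n '' {y | adj x y})) atTop
        (𝓝 (sSup (u '' {y | adj x y}))) := by
      simp only [hsupeq]
      exact tendsto_finset_sup'_aux s hs G u hmemlim
    have hinf : Tendsto (fun n => sInf (G n '' {y | adj x y})) atTop
        (𝓝 (sInf (u '' {y | adj x y}))) := by
      simp only [hinfeq]
      exact tendsto_finset_inf'_aux s hs G u hmemlim
    have h2 : Tendsto (fun n => G (n+1) x) atTop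
        (𝓝 ((sSup (u '' {y | adj x y}) + sInf (u '' {y | adj x y})) / 2 + f x)) := by
      simp only [hGsucc]
      exact (((hsup.add hinf).div_const 2).add_const (f x))
    exact tendsto_nhds_unique h1 h2
  -- selection maps
  choose yM hyM using hmax
  choose ym hym using hmin
  -- strict gaps
  have hbddA : ∀ (g : V → ℝ) (x : V), BddAbove (g '' {z | adj x z}) :=
    fun g x => ((Set.toFinite _).image g).bddAbove
  have hbddB : ∀ (g : V → ℝ) (x : V), BddBelow (g '' {z | adj x z}) :=
    fun g x => ((Set.toFinite _).image g).bddBelow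
  have hstrictM : ∀ x y, adj x y → y ≠ yM x → u y < u (yM x) := by
    intro x y hxy hne
    have hle : u y ≤ sSup (u '' {z | adj x z}) := le_csSup (hbddA u x) ⟨y, hxy, rfl⟩
    rw [← (hyM x).1.2] at hle
    rcases lt_or_eq_of_le hle with h | h
    · exact h
    · exact absurd ((hyM x).2 y ⟨hxy, by rw [h, (hyM x).1.2]⟩) hne
  have hstrictm : ∀ x y, adj x y → y ≠ ym x → u (ym x) < u y := by
    intro x y hxy hne
    have hle : sInf (u '' {z | adj x z}) ≤ u y := csInf_le (hbddB u x) ⟨y, hxy, rfl⟩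
    rw [← (hym x).1.2] at hle
    rcases lt_or_eq_of_le hle with h | h
    · exact h
    · exact absurd ((hym x).2 y ⟨hxy, by rw [← h, (hym x).1.2]⟩) hne
  -- a uniform gap δ
  obtain ⟨δ₁, hδ₁pos, hδ₁⟩ : ∃ δ > 0, ∀ x y, adj x y → y ≠ yM x → u y ≤ u (yM x) - δ := by
    set P : Finset (V × V) := Finset.univ.filter (fun p => adj p.1 p.2 ∧ p.2 ≠ yM p.1) with hP
    by_cases hPne : P.Nonempty
    · refine ⟨P.inf' hPne (fun p => u (yM p.1) - u p.2), ?_, ?_⟩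
      · rw [gt_iff_lt, Finset.lt_inf'_iff]
        intro p hp
        rw [hP, Finset.mem_filter] at hp
        linarith [hstrictM p.1 p.2 hp.2.1 hp.2.2]
      · intro x y hxy hne
        have hmem : (x, y) ∈ P := by rw [hP, Finset.mem_filter]; exact ⟨Finset.mem_univ _, hxy, hne⟩
        have := Finset.inf'_le (fun p => u (yM p.1) - u p.2) hmem
        linarith
    · refine ⟨1, one_pos, fun x y hxy hne => absurd ?_ hPne⟩
      exact ⟨(x, y), by rw [hP, Finset.mem_filter]; exact ⟨Finset.mem_univ _, hxy, hne⟩⟩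
  obtain ⟨δ₂, hδ₂pos, hδ₂⟩ : ∃ δ > 0, ∀ x y, adj x y → y ≠ ym x → u (ym x) + δ ≤ u y := by
    set P : Finset (V × V) := Finset.univ.filter (fun p => adj p.1 p.2 ∧ p.2 ≠ ym p.1) with hP
    by_cases hPne : P.Nonempty
    · refine ⟨P.inf' hPne (fun p => u p.2 - u (ym p.1)), ?_, ?_⟩
      · rw [gt_iff_lt, Finset.lt_inf'_iff]
        intro p hp
        rw [hP, Finset.mem_filter] at hp
        linarith [hstrictm p.1 p.2 hp.2.1 hp.2.2]
      · intro x y hxy hne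
        have hmem : (x, y) ∈ P := by rw [hP, Finset.mem_filter]; exact ⟨Finset.mem_univ _, hxy, hne⟩
        have := Finset.inf'_le (fun p => u p.2 - u (ym p.1)) hmem
        linarith
    · refine ⟨1, one_pos, fun x y hxy hne => absurd ?_ hPne⟩
      exact ⟨(x, y), by rw [hP, Finset.mem_filter]; exact ⟨Finset.mem_univ _, hxy, hne⟩⟩
  set δ : ℝ := min δ₁ δ₂ with hδdef
  have hδpos : 0 < δ := lt_min hδ₁pos hδ₂pos
  -- near the limit, sup and inf are attained at the selection maps
  have hattain : ∀ n, (∀ z, |G n z - u z| < δ/2) → ∀ x,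
      sSup (G n '' {y | adj x y}) = G n (yM x) ∧ sInf (G n '' {y | adj x y}) = G n (ym x) := by
    intro n hn x
    constructor
    · have hmem : sSup (G n '' {y | adj x y}) ∈ G n '' {y | adj x y} :=
        Set.Nonempty.csSup_mem ((hNne x).image _) ((Set.toFinite _).image _)
      obtain ⟨y', hy', heq⟩ := hmem
      rcases eq_or_ne y' (yM x) with hcase | hcase
      · rw [← heq, hcase]
      · exfalso
        have h1 : G n y' < u y' + δ/2 := by have := abs_lt.mp (hn y'); linarith
        have h2 : u y' ≤ u (yM x) - δ₁ := hδ₁ x y' hy' hcase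
        have h3 : u (yM x) - δ/2 < G n (yM x) := by have := abs_lt.mp (hn (yM x)); linarith
        have h4 : G n (yM x) ≤ sSup (G n '' {y | adj x y}) :=
          le_csSup (hbddA (G n) x) ⟨yM x, (hyM x).1.1, rfl⟩
        rw [← heq] at h4
        have hle : δ ≤ δ₁ := min_le_left _ _
        linarith
    · have hmem : sInf (G n '' {y | adj x y}) ∈ G n '' {y | adj x y} :=
        Set.Nonempty.csInf_mem ((hNne x).image _) ((Set.toFinite _).image _)
      obtain ⟨y', hy', heq⟩ := hmem
      rcases eq_or_ne y' (ym x) with hcase | hcase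
      · rw [← heq, hcase]
      · exfalso
        have h1 : u y' - δ/2 < G n y' := by have := abs_lt.mp (hn y'); linarith
        have h2 : u (ym x) + δ₂ ≤ u y' := hδ₂ x y' hy' hcase
        have h3 : G n (ym x) < u (ym x) + δ/2 := by have := abs_lt.mp (hn (ym x)); linarith
        have h4 : sInf (G n '' {y | adj x y}) ≤ G n (ym x) :=
          csInf_le (hbddB (G n) x) ⟨ym x, (hym x).1.1, rfl⟩
        rw [← heq] at h4
        have hle : δ ≤ δ₂ := min_le_right _ _
        linarith
  -- one-step recursion near the limit
  have hstep : ∀ n, (∀ z, |G n z - u z| < δ/2) → ∀ x,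
      G (n+1) x - u x = ((G n (yM x) - u (yM x)) + (G n (ym x) - u (ym x))) / 2 := by
    intro n hn x
    have h := hattain n hn x
    have h1 : u (yM x) = sSup (u '' {z | adj x z}) := (hyM x).1.2
    have h2 : u (ym x) = sInf (u '' {z | adj x z}) := (hym x).1.2
    rw [hGsucc, h.1, h.2, hfix x, ← h1, ← h2]
    ring
  -- uniform convergence
  have hunif : ∀ ε : ℝ, 0 < ε → ∃ N, ∀ n ≥ N, ∀ z, |G n z - u z| < ε := by
    intro ε hε
    have hev : ∀ᶠ n in atTop, ∀ z, |G n z - u z| < ε := by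
      rw [eventually_all]
      intro z
      have h0 : Tendsto (fun n => G n z - u z) atTop (𝓝 0) := by
        simpa using (hlim z).sub_const (u z)
      have := h0.abs
      rw [abs_zero] at this
      exact this.eventually_lt_const hε
    exact eventually_atTop.mp hev
  obtain ⟨N₀, hN₀⟩ := hunif (δ/2) (by positivity)
  -- the operator and the error vector
  set T : (V → ℝ) →ₗ[ℝ] (V → ℝ) := halfOp yM ym with hTdef
  set E : V → ℝ := fun x => G N₀ x - u x with hEdef
  have hTapp : ∀ (v : V → ℝ) x, T v x = (v (yM x) + v (ym x)) / 2 := fun v x => rfl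
  have horbit : ∀ k, (fun x => G (N₀ + k) x - u x) = (T ^ k) E := by
    intro k
    induction k with
    | zero => simp [hEdef]
    | succ k ih =>
      funext x
      have hrec : G (N₀ + (k+1)) x - u x =
          ((G (N₀ + k) (yM x) - u (yM x)) + (G (N₀ + k) (ym x) - u (ym x))) / 2 := by
        have := hstep (N₀ + k) (hN₀ (N₀ + k) (Nat.le_add_right _ _)) x
        simpa [Nat.add_assoc] using this
      rw [hrec]
      have hTk : (T ^ (k+1)) E = T ((T ^ k) E) := by
        rw [pow_succ']; rfl
      rw [hTk, hTapp, ← ih]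
  -- non-expansiveness
  have hTnorm : ∀ v : V → ℝ, ‖T v‖ ≤ ‖v‖ := by
    intro v
    rw [pi_norm_le_iff_of_nonneg (norm_nonneg v)]
    intro x
    have h1 : |v (yM x)| ≤ ‖v‖ := by
      have := norm_le_pi_norm v (yM x); rwa [Real.norm_eq_abs] at this
    have h2 : |v (ym x)| ≤ ‖v‖ := by
      have := norm_le_pi_norm v (ym x); rwa [Real.norm_eq_abs] at this
    rw [hTapp, Real.norm_eq_abs]
    have := abs_add_le (v (yM x)) (v (ym x))
    rw [abs_div]
    have h2' : |(2:ℝ)| = 2 := by norm_num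
    rw [h2']
    linarith
  -- the orbit tends to 0
  have h0 : Tendsto (fun k => (T ^ k) E) atTop (𝓝 0) := by
    rw [tendsto_pi_nhds]
    intro x
    have heq : (fun k => (T ^ k) E x) = fun k => G (N₀ + k) x - u x := by
      funext k; rw [← horbit k]
    rw [heq]
    have : Tendsto (fun k => G (N₀ + k) x) atTop (𝓝 (u x)) := by
      have := (hlim x).comp (tendsto_add_atTop_nat N₀)
      simpa [Function.comp_def, Nat.add_comm] using this
    simpa using this.sub_const (u x)
  obtain ⟨C₀, hC₀pos, α, hα0, hα1, hC₀⟩ := orbit_exp_decay T hTnorm E h0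
  -- assemble the constants
  set B : ℝ := (Finset.range (N₀ + 1)).sup' (by simp) (fun n => ‖(fun x => G n x - u x)‖) with hBdef
  have hB0 : 0 ≤ B := by
    have h : ‖(fun x => G 0 x - u x)‖ ≤ B := by
      rw [hBdef]
      exact Finset.le_sup' (fun m => ‖(fun x => G m x - u x)‖)
        (Finset.mem_range.mpr (Nat.succ_pos _))
    exact le_trans (norm_nonneg _) h
  have hαpow : ∀ m : ℕ, (0:ℝ) < α ^ m := fun m => pow_pos hα0 m
  refine ⟨(B + C₀ + 1) / α ^ N₀, by positivity, α, hα0, hα1, fun n => ?_⟩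
  have hsup_le : (⨆ x : V, |G n x - u x|) ≤ ‖(fun x => G n x - u x)‖ := by
    apply ciSup_le
    intro x
    have := norm_le_pi_norm (fun x => G n x - u x) x
    rwa [Real.norm_eq_abs] at this
  refine hsup_le.trans ?_
  by_cases hn : N₀ ≤ n
  · have heq : (fun x => G n x - u x) = (T ^ (n - N₀)) E := by
      have := horbit (n - N₀)
      rwa [Nat.add_sub_cancel' hn] at this
    rw [heq]
    have hb := hC₀ (n - N₀)
    have hpow : α ^ (n - N₀) = α ^ n * (α ^ N₀)⁻¹ := pow_sub₀ α (ne_of_gt hα0) hn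
    rw [hpow] at hb
    refine hb.trans ?_
    rw [div_eq_mul_inv]
    have h1 : C₀ ≤ B + C₀ + 1 := by linarith
    have h2 : (0:ℝ) < (α ^ N₀)⁻¹ := by positivity
    calc C₀ * (α ^ n * (α ^ N₀)⁻¹) = C₀ * (α ^ N₀)⁻¹ * α ^ n := by ring
      _ ≤ (B + C₀ + 1) * (α ^ N₀)⁻¹ * α ^ n := by
          apply mul_le_mul_of_nonneg_right _ (le_of_lt (hαpow n))
          exact mul_le_mul_of_nonneg_right h1 (le_of_lt h2)
  · push_neg at hn
    have h1 : ‖(fun x => G n x - u x)‖ ≤ B := by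
      rw [hBdef]
      exact Finset.le_sup' (fun m => ‖(fun x => G m x - u x)‖)
        (Finset.mem_range.mpr (Nat.lt_succ_of_lt hn))
    have h2 : α ^ N₀ ≤ α ^ n :=
      pow_le_pow_of_le_one (le_of_lt hα0) (le_of_lt hα1) (le_of_lt hn)
    refine h1.trans ?_
    rw [div_mul_eq_mul_div, le_div_iff₀ (hαpow N₀)]
    have hαn := hαpow n
    nlinarith
end
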